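/- arXiv:1307.7657 — 3 statements merged into one kernel-verified Lean document; each statement's English description precedes it below -/
import Mathlib

section
/- Let J be a strongly stable monomial ideal. Let ℤ[C] be the polynomial ring over ℤ in the indeterminates C_{αβ} (for x^α ∈ B_J, x^β ∈ N(J)_{|α|}), let 𝓕_J = { x^α − Σ_{x^β ∈ N(J)_{|α|}} C_{αβ} x^β : x^α ∈ B_J } be the generic J-marked set in ℤ[C][x₀,…,xₙ], 𝓘 = (𝓕_J), and let 𝔦_J ⊆ ℤ[C] be the ideal generated by the x-coefficients of all polynomials in 𝓘 ∩ ⟨N(J)⟩. Then for every commutative noetherian ring A, a J-marked set F_J in A[x] with coefficients c_{αβ} is a J-marked basis if and only if the evaluation homomorphism φ_{F_J}: ℤ[C] → A, C_{αβ} ↦ c_{αβ}, satisfies 𝔦_J ⊆ ker φ_{F_J} (i.e., φ_{F_J} factors through ℤ[C]/𝔦_J). -/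
open MvPolynomial

noncomputable section

/-- Exponent vectors of monomials in the variables `x₀, …, xₙ`. -/
abbrev Mon (n : ℕ) : Type := Fin (n + 1) →₀ ℕ

namespace MarkedFamilies

variable {n : ℕ}

/-- The total degree of a monomial given by its exponent vector. -/
def mdeg (α : Mon n) : ℕ := α.sum fun _ e => e

/-- A monomial ideal, identified with its (upward closed) set of monomials. -/
def IsMonomialIdeal (J : Set (Mon n)) : Prop := ∀ α ∈ J, ∀ δ : Mon n, α + δ ∈ J

/-- A strongly stable monomial ideal: a monomial ideal such that for every monomial
`x^α ∈ J`, every variable `x_j` dividing `x^α` and every `i > j`, `(x_i/x_j)·x^α ∈ J`. -/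
def IsStronglyStable (J : Set (Mon n)) : Prop :=
  IsMonomialIdeal J ∧
    ∀ α ∈ J, ∀ j : Fin (n + 1), α j ≠ 0 → ∀ i : Fin (n + 1), j < i →
      α - Finsupp.single j 1 + Finsupp.single i 1 ∈ J

/-- The minimal monomial generators `B_J` of a monomial ideal `J`. -/
def minGens (J : Set (Mon n)) : Set (Mon n) :=
  {α | α ∈ J ∧ ∀ j : Fin (n + 1), α j ≠ 0 → α - Finsupp.single j 1 ∉ J}

/-- `min x^γ ≥ max x^δ`: every variable dividing `x^γ` is at least every variable
dividing `x^δ` (vacuously true when either monomial is `1`). -/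
def minGeMax (γ δ : Mon n) : Prop := ∀ i ∈ γ.support, ∀ j ∈ δ.support, j ≤ i

/-- Lexicographic order induced by `x₀ < ⋯ < xₙ`: `a <ₗₑₓ b` iff at the largest
index where they differ, `a` has the smaller exponent. -/
def lexLt (a b : Mon n) : Prop :=
  ∃ i : Fin (n + 1), a i < b i ∧ ∀ j : Fin (n + 1), i < j → a j = b j

/-- A saturated strongly stable ideal: strongly stable and no minimal generator is
divisible by `x₀`. -/
def IsSaturatedSS (J : Set (Mon n)) : Prop :=
  IsStronglyStable J ∧ ∀ α ∈ minGens J, α 0 = 0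

/-- The truncation `J_{≥ t}`: the (monomial) ideal generated by the monomials of `J`
of degree at least `t`. -/
def truncSet (J : Set (Mon n)) (t : ℕ) : Set (Mon n) := {α | α ∈ J ∧ t ≤ mdeg α}

section Ring

variable (A : Type*) [CommRing A]

/-- `⟨N(J)⟩`: the `A`-span of the monomials not in `J`. -/
def nSpan (J : Set (Mon n)) : Submodule A (MvPolynomial (Fin (n + 1)) A) :=
  Submodule.span A {p | ∃ β : Mon n, β ∉ J ∧ p = monomial β (1 : A)}

/-- `⟨N(J)_s⟩`: the `A`-span of the monomials of degree `s` not in `J`. -/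
def nSpanDeg (J : Set (Mon n)) (s : ℕ) : Submodule A (MvPolynomial (Fin (n + 1)) A) :=
  Submodule.span A {p | ∃ β : Mon n, β ∉ J ∧ mdeg β = s ∧ p = monomial β (1 : A)}

/-- `I_s`: the degree-`s` homogeneous component of an ideal, as an `A`-submodule. -/
def idealDeg (I : Ideal (MvPolynomial (Fin (n + 1)) A)) (s : ℕ) :
    Submodule A (MvPolynomial (Fin (n + 1)) A) :=
  Submodule.restrictScalars A I ⊓ homogeneousSubmodule (Fin (n + 1)) A s

/-- `I_{≥ s}`: the ideal `⊕_{t ≥ s} I_t`, i.e. the ideal generated by the homogeneous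
elements of `I` of degree at least `s`. -/
def idealGeq (I : Ideal (MvPolynomial (Fin (n + 1)) A)) (s : ℕ) :
    Ideal (MvPolynomial (Fin (n + 1)) A) :=
  Ideal.span {f | f ∈ I ∧ ∃ t : ℕ, s ≤ t ∧ f.IsHomogeneous t}

/-- A homogeneous ideal of the polynomial ring. -/
def IsHomogIdeal (I : Ideal (MvPolynomial (Fin (n + 1)) A)) : Prop :=
  ∀ f ∈ I, ∀ s : ℕ, homogeneousComponent s f ∈ I

variable {A}

/-- A `J`-marked set: a family assigning to each minimal generator `x^α ∈ B_J` a
polynomial `f_α = x^α − Σ_{x^β ∈ N(J)_{|α|}} c_{αβ} x^β`. -/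
def IsMarkedSet (J : Set (Mon n)) (F : Mon n → MvPolynomial (Fin (n + 1)) A) : Prop :=
  ∀ α ∈ minGens J, (F α).coeff α = 1 ∧
    ∀ β ∈ (F α).support, β ≠ α → β ∉ J ∧ mdeg β = mdeg α

/-- The ideal generated by a marked set. -/
def markedIdeal (J : Set (Mon n)) (F : Mon n → MvPolynomial (Fin (n + 1)) A) :
    Ideal (MvPolynomial (Fin (n + 1)) A) :=
  Ideal.span (F '' minGens J)

/-- A `J`-marked basis: a `J`-marked set `F` with `A[x] = (F) ⊕ ⟨N(J)⟩` as `A`-modules. -/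
def IsMarkedBasis (J : Set (Mon n)) (F : Mon n → MvPolynomial (Fin (n + 1)) A) : Prop :=
  IsMarkedSet J F ∧
    IsCompl (Submodule.restrictScalars A (markedIdeal J F)) (nSpan A J)

/-- `F_J^{(s)} = { x^δ f_α : deg(x^δ f_α) = s, min x^α ≥ max x^δ }`. -/
def FSet (J : Set (Mon n)) (F : Mon n → MvPolynomial (Fin (n + 1)) A) (s : ℕ) :
    Set (MvPolynomial (Fin (n + 1)) A) :=
  {p | ∃ α δ : Mon n, α ∈ minGens J ∧ mdeg α + mdeg δ = s ∧ minGeMax α δ ∧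
        p = monomial δ (1 : A) * F α}

/-- `F̂_J^{(s)} = { x^δ f_α : deg(x^δ f_α) = s, min x^α < max x^δ }`. -/
def FHatSet (J : Set (Mon n)) (F : Mon n → MvPolynomial (Fin (n + 1)) A) (s : ℕ) :
    Set (MvPolynomial (Fin (n + 1)) A) :=
  {p | ∃ α δ : Mon n, α ∈ minGens J ∧ mdeg α + mdeg δ = s ∧ ¬ minGeMax α δ ∧
        p = monomial δ (1 : A) * F α}

/-- `SF_J^{(s)} = { x^δ f_β − x^γ f_α : x^δ f_β ∈ F̂_J^{(s)}, x^γ f_α ∈ F_J^{(s)},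
x^δ x^β = x^γ x^α }`. -/
def SFSet (J : Set (Mon n)) (F : Mon n → MvPolynomial (Fin (n + 1)) A) (s : ℕ) :
    Set (MvPolynomial (Fin (n + 1)) A) :=
  {p | ∃ α γ β δ : Mon n, α ∈ minGens J ∧ β ∈ minGens J ∧
      mdeg β + mdeg δ = s ∧ ¬ minGeMax β δ ∧
      mdeg α + mdeg γ = s ∧ minGeMax α γ ∧
      δ + β = γ + α ∧ p = monomial δ (1 : A) * F β - monomial γ (1 : A) * F α}

/-- A `(J_s)`-marked set: one marked polynomial `f̃_γ = x^γ − Σ_{x^δ ∈ N(J)_s} d_{γδ} x^δ`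
for each monomial `x^γ` of degree `s` in `J`. -/
def IsTruncMarkedSet (J : Set (Mon n)) (s : ℕ)
    (f : Mon n → MvPolynomial (Fin (n + 1)) A) : Prop :=
  ∀ γ : Mon n, γ ∈ J → mdeg γ = s →
    (f γ).coeff γ = 1 ∧ ∀ β ∈ (f γ).support, β ≠ γ → β ∉ J ∧ mdeg β = s

end Ring

/-- Index set for the generic coefficients `C_{αβ}` (`x^α ∈ B_J`, `x^β ∈ N(J)_{|α|}`). -/
abbrev CIdx (J : Set (Mon n)) : Type :=
  {p : Mon n × Mon n // p.1 ∈ minGens J ∧ p.2 ∉ J ∧ mdeg p.2 = mdeg p.1}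

/-- The coefficient ring `ℤ[C]`. -/
abbrev ZC (J : Set (Mon n)) : Type := MvPolynomial (CIdx J) ℤ

/-- The generic `J`-marked set `𝓕_J = { x^α − Σ_{x^β ∈ N(J)_{|α|}} C_{αβ} x^β }`
in `ℤ[C][x]`, characterized through its coefficients. -/
def IsGenericMarkedSet (J : Set (Mon n))
    (𝓕 : Mon n → MvPolynomial (Fin (n + 1)) (ZC J)) : Prop :=
  ∀ α : Mon n, ∀ hα : α ∈ minGens J,
    (𝓕 α).coeff α = 1 ∧
    (∀ γ : Mon n, ∀ hγ : γ ∉ J ∧ mdeg γ = mdeg α,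
      (𝓕 α).coeff γ = - MvPolynomial.X ⟨(α, γ), hα, hγ.1, hγ.2⟩) ∧
    (∀ γ : Mon n, γ ≠ α → ¬(γ ∉ J ∧ mdeg γ = mdeg α) → (𝓕 α).coeff γ = 0)

/-- The ideal `𝔦_J ⊆ ℤ[C]` generated by the `x`-coefficients of all polynomials
in `(𝓕_J) ∩ ⟨N(J)⟩`. -/
def markedCoeffIdeal (J : Set (Mon n))
    (𝓕 : Mon n → MvPolynomial (Fin (n + 1)) (ZC J)) : Ideal (ZC J) :=
  Ideal.span {c : ZC J | ∃ p : MvPolynomial (Fin (n + 1)) (ZC J),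
    p ∈ markedIdeal J 𝓕 ∧ p ∈ nSpan (ZC J) J ∧ ∃ γ : Mon n, p.coeff γ = c}

/-- The evaluation homomorphism `φ_{F_J} : ℤ[C] → A`, `C_{αβ} ↦ c_{αβ}`, associated to a
`J`-marked set `F` with `f_α = x^α − Σ c_{αβ} x^β` (so `c_{αβ} = −(F α).coeff β`). -/
noncomputable def evalHom (J : Set (Mon n)) {A : Type*} [CommRing A]
    (F : Mon n → MvPolynomial (Fin (n + 1)) A) : ZC J →+* A :=
  MvPolynomial.eval₂Hom (Int.castRingHom A) fun p => -((F p.val.1).coeff p.val.2)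

/-- `x^γ` is the `σ`-leading monomial of `g` (with nonzero leading coefficient). -/
def IsLeadingMon {A : Type*} [CommRing A] (σlt : Mon n → Mon n → Prop)
    (g : MvPolynomial (Fin (n + 1)) A) (γ : Mon n) : Prop :=
  g.coeff γ ≠ 0 ∧ ∀ δ ∈ g.support, δ ≠ γ → σlt δ γ

/-- `LC(I, x^γ)`: the set of leading coefficients at `x^γ` of elements of `I`,
together with `0`. -/
def LCset {A : Type*} [CommRing A] (σlt : Mon n → Mon n → Prop)
    (I : Ideal (MvPolynomial (Fin (n + 1)) A)) (γ : Mon n) : Set A :=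
  {a | ∃ g ∈ I, IsLeadingMon σlt g γ ∧ g.coeff γ = a} ∪ {0}

/-- A monic ideal with respect to the term ordering `σ`. -/
def IsMonicIdeal {A : Type*} [CommRing A] (σlt : Mon n → Mon n → Prop)
    (I : Ideal (MvPolynomial (Fin (n + 1)) A)) : Prop :=
  ∀ γ : Mon n, LCset σlt I γ = {0} ∨ LCset σlt I γ = Set.univ

/-- The set of `σ`-leading monomials of elements of `I` (i.e. `in_σ(I)`,
identified with its set of monomials). -/
def leadingMons {A : Type*} [CommRing A] (σlt : Mon n → Mon n → Prop)
    (I : Ideal (MvPolynomial (Fin (n + 1)) A)) : Set (Mon n) :=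
  {γ | ∃ g ∈ I, IsLeadingMon σlt g γ}

end MarkedFamilies
end

noncomputable section
namespace MBAux
open MarkedFamilies MvPolynomial

variable {n : ℕ}

/-! ### Basic facts about `mdeg` -/

lemma mdeg_add (a b : Mon n) : mdeg (a + b) = mdeg a + mdeg b :=
  Finsupp.sum_add_index' (fun _ => rfl) (fun _ _ _ => rfl)

lemma apply_le_mdeg (a : Mon n) (i : Fin (n + 1)) : a i ≤ mdeg a := by
  by_cases h : a i = 0
  · omega
  · simp only [mdeg, Finsupp.sum]
    exact Finset.single_le_sum (fun j _ => Nat.zero_le _) (Finsupp.mem_support_iff.2 h)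

lemma mdeg_eq_zero {a : Mon n} (h : mdeg a = 0) : a = 0 := by
  ext i
  have := apply_le_mdeg a i
  simpa using by omega

lemma mdeg_single (j : Fin (n + 1)) : mdeg (Finsupp.single j 1) = 1 := by
  simp only [mdeg]
  rw [Finsupp.sum_single_index rfl]

lemma single_le {η : Mon n} {j : Fin (n + 1)} (hj : η j ≠ 0) : Finsupp.single j 1 ≤ η := by
  rw [Finsupp.le_def]
  intro k
  rw [Finsupp.single_apply]
  split_ifs with h
  · subst h; omega
  · omega

lemma mdeg_sub_single {η : Mon n} {j : Fin (n + 1)} (hj : η j ≠ 0) :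
    mdeg (η - Finsupp.single j 1) + 1 = mdeg η := by
  have h1 : η - Finsupp.single j 1 + Finsupp.single j 1 = η :=
    tsub_add_cancel_of_le (single_le hj)
  conv_rhs => rw [← h1]
  rw [mdeg_add, mdeg_single]

/-! ### Lexicographic trichotomy and encoding -/

lemma lex_trichot (a b : Mon n) : a = b ∨ lexLt a b ∨ lexLt b a := by
  classical
  by_cases h : a = b
  · exact Or.inl h
  · have hD : (Finset.univ.filter fun i : Fin (n + 1) => a i ≠ b i).Nonempty := by
      by_contra hne
      rw [Finset.not_nonempty_iff_eq_empty] at hne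
      apply h
      ext i
      by_contra hi
      have hmem : i ∈ Finset.univ.filter fun i : Fin (n + 1) => a i ≠ b i := by
        simp [hi]
      rw [hne] at hmem
      simp at hmem
    set t := (Finset.univ.filter fun i : Fin (n + 1) => a i ≠ b i).max' hD with ht
    have htm : t ∈ Finset.univ.filter fun i : Fin (n + 1) => a i ≠ b i := Finset.max'_mem _ _
    have htne : a t ≠ b t := (Finset.mem_filter.1 htm).2
    have heq : ∀ j : Fin (n + 1), t < j → a j = b j := by
      intro j hj
      by_contra hne
      have : j ∈ Finset.univ.filter fun i : Fin (n + 1) => a i ≠ b i := by simp [hne]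
      exact absurd (Finset.le_max' _ j this) (not_le.2 hj)
    rcases Nat.lt_or_ge (a t) (b t) with h' | h'
    · exact Or.inr (Or.inl ⟨t, h', heq⟩)
    · refine Or.inr (Or.inr ⟨t, ?_, fun j hj => (heq j hj).symm⟩)
      omega

def enc (B : ℕ) (a : Mon n) : ℕ := ∑ i : Fin (n + 1), a i * B ^ (i : ℕ)

lemma geo {B : ℕ} (hB : 0 < B) (g : ℕ → ℕ) (hg : ∀ k, g k < B) (m : ℕ) :
    ∑ k ∈ Finset.range m, g k * B ^ k < B ^ m := by
  induction m with
  | zero => simp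
  | succ m ih =>
    rw [Finset.sum_range_succ, pow_succ]
    have h1 : g m * B ^ m ≤ (B - 1) * B ^ m :=
      Nat.mul_le_mul_right _ (by have := hg m; omega)
    have h2 : B ^ m + (B - 1) * B ^ m = B ^ m * B := by
      obtain ⟨b, rfl⟩ : ∃ b, B = b + 1 := ⟨B - 1, by omega⟩
      simp only [Nat.add_sub_cancel]
      ring
    calc ∑ k ∈ Finset.range m, g k * B ^ k + g m * B ^ m
        < B ^ m + g m * B ^ m := Nat.add_lt_add_right ih _
      _ ≤ B ^ m + (B - 1) * B ^ m := Nat.add_le_add_left h1 _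
      _ = B ^ m * B := h2

lemma enc_lt {B : ℕ} {a b : Mon n} (ha : ∀ i, a i < B) (h : lexLt a b) :
    enc B a < enc B b := by
  classical
  obtain ⟨t, hlt, heq⟩ := h
  have hB : 0 < B := Nat.lt_of_le_of_lt (Nat.zero_le _) (ha t)
  have hsplit : ∀ c : Mon n,
      enc B c = (∑ i ∈ Finset.univ.filter fun i : Fin (n + 1) => t < i, c i * B ^ (i : ℕ))
        + (c t * B ^ (t : ℕ)
          + ∑ i ∈ Finset.univ.filter fun i : Fin (n + 1) => i < t, c i * B ^ (i : ℕ)) := by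
    intro c
    rw [enc, ← Finset.sum_filter_add_sum_filter_not Finset.univ
      (fun i : Fin (n + 1) => t < i) (fun i => c i * B ^ (i : ℕ))]
    congr 1
    have hset : (Finset.univ.filter fun i : Fin (n + 1) => ¬ t < i)
        = insert t (Finset.univ.filter fun i : Fin (n + 1) => i < t) := by
      ext i
      simp only [Finset.mem_filter, Finset.mem_univ, true_and, Finset.mem_insert, not_lt]
      constructor
      · intro hi
        rcases lt_or_eq_of_le hi with h' | h'
        · exact Or.inr h'
        · exact Or.inl h'
      · rintro (rfl | hi)
        · exact le_rfl
        · exact le_of_lt hi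
    rw [hset, Finset.sum_insert (by simp)]
  rw [hsplit a, hsplit b]
  have h1 : (∑ i ∈ Finset.univ.filter fun i : Fin (n + 1) => t < i, a i * B ^ (i : ℕ))
      = ∑ i ∈ Finset.univ.filter fun i : Fin (n + 1) => t < i, b i * B ^ (i : ℕ) :=
    Finset.sum_congr rfl fun i hi => by rw [heq i (Finset.mem_filter.1 hi).2]
  have h2 : (∑ i ∈ Finset.univ.filter fun i : Fin (n + 1) => i < t, a i * B ^ (i : ℕ))
      < B ^ (t : ℕ) := by
    have hbij : (∑ i ∈ Finset.univ.filter fun i : Fin (n + 1) => i < t, a i * B ^ (i : ℕ))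
        = ∑ k ∈ Finset.range (t : ℕ),
            (fun k => if hk : k < n + 1 then a ⟨k, hk⟩ else 0) k * B ^ k := by
      refine Finset.sum_bij (fun i _ => (i : ℕ)) ?_ ?_ ?_ ?_
      · intro i hi
        simp only [Finset.mem_filter, Finset.mem_univ, true_and] at hi
        simpa [Finset.mem_range] using hi
      · intro i _ j _ hij
        exact Fin.val_injective hij
      · intro k hk
        rw [Finset.mem_range] at hk
        have htn : (t : ℕ) < n + 1 := t.isLt
        exact ⟨⟨k, by omega⟩, Finset.mem_filter.2 ⟨Finset.mem_univ _, Fin.lt_def.2 hk⟩, rfl⟩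
      · intro i _
        have hi : (i : ℕ) < n + 1 := i.isLt
        simp [hi]
    rw [hbij]
    apply geo hB
    intro k
    split
    · exact ha _
    · exact hB
  rw [h1]
  apply Nat.add_lt_add_left
  calc a t * B ^ (t : ℕ)
        + ∑ i ∈ Finset.univ.filter fun i : Fin (n + 1) => i < t, a i * B ^ (i : ℕ)
      < a t * B ^ (t : ℕ) + B ^ (t : ℕ) := Nat.add_lt_add_left h2 _
    _ = (a t + 1) * B ^ (t : ℕ) := by ring
    _ ≤ b t * B ^ (t : ℕ) := Nat.mul_le_mul_right _ (by omega)
    _ ≤ b t * B ^ (t : ℕ)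
        + ∑ i ∈ Finset.univ.filter fun i : Fin (n + 1) => i < t, b i * B ^ (i : ℕ) :=
      Nat.le_add_right _ _

/-! ### Eliahou–Kervaire style decomposition -/

lemma zero_mem_minGens {J : Set (Mon n)} (h : (0 : Mon n) ∈ J) : (0 : Mon n) ∈ minGens J :=
  ⟨h, fun j hj => absurd rfl hj⟩

lemma minGeMax_zero (γ : Mon n) : minGeMax γ (0 : Mon n) := by
  intro i _ j hj
  simp at hj

lemma minGens_subset (J : Set (Mon n)) : minGens J ⊆ J := fun _ h => h.1

lemma sub_add_swap {η : Mon n} {i j : Fin (n + 1)} (hij : j ≠ i) (hi : η i ≠ 0) :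
    η - Finsupp.single i 1 - Finsupp.single j 1 + Finsupp.single i 1
      = η - Finsupp.single j 1 := by
  ext k
  simp only [Finsupp.add_apply, Finsupp.tsub_apply, Finsupp.single_apply]
  rcases eq_or_ne i k with rfl | hik
  · rw [if_pos rfl, if_neg hij]
    omega
  · rw [if_neg hik]
    split_ifs <;> omega

lemma exists_dec {J : Set (Mon n)} (hJ : IsStronglyStable J) :
    ∀ η ∈ J, ∃ p : Mon n × Mon n, p.1 ∈ minGens J ∧ minGeMax p.1 p.2 ∧ η = p.1 + p.2 := by
  suffices H : ∀ N : ℕ, ∀ η ∈ J, mdeg η ≤ N →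
      ∃ p : Mon n × Mon n, p.1 ∈ minGens J ∧ minGeMax p.1 p.2 ∧ η = p.1 + p.2 from
    fun η hη => H (mdeg η) η hη le_rfl
  intro N
  induction N with
  | zero =>
    intro η hη hd
    have hη0 : η = 0 := mdeg_eq_zero (Nat.le_zero.1 hd)
    subst hη0
    exact ⟨(0, 0), zero_mem_minGens hη, minGeMax_zero _, (add_zero 0).symm⟩
  | succ N ih =>
    intro η hη hd
    by_cases hm : η ∈ minGens J
    · exact ⟨(η, 0), hm, minGeMax_zero _, (add_zero η).symm⟩
    · have hne : η ≠ 0 := fun h0 => hm (h0 ▸ zero_mem_minGens (h0 ▸ hη))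
      have hsup : η.support.Nonempty := Finsupp.support_nonempty_iff.2 hne
      set j := η.support.min' hsup with hjdef
      have hjs : j ∈ η.support := Finset.min'_mem _ _
      have hj0 : η j ≠ 0 := Finsupp.mem_support_iff.1 hjs
      have hjmin : ∀ i ∈ η.support, j ≤ i := fun i => Finset.min'_le _ i
      have hsub : η - Finsupp.single j 1 ∈ J := by
        obtain ⟨i, hi0, hiJ⟩ : ∃ i, η i ≠ 0 ∧ η - Finsupp.single i 1 ∈ J := by
          by_contra hc
          push_neg at hc
          exact hm ⟨hη, fun i hi => hc i hi⟩
        rcases eq_or_lt_of_le (hjmin i (Finsupp.mem_support_iff.2 hi0)) with heq | hlt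
        · rwa [heq]
        · have hji : (η - Finsupp.single i 1 : Mon n) j ≠ 0 := by
            rw [Finsupp.tsub_apply, Finsupp.single_apply, if_neg (ne_of_lt hlt).symm]
            omega
          have hmove := hJ.2 _ hiJ j hji i hlt
          rwa [sub_add_swap (ne_of_lt hlt) hi0] at hmove
      have hdN : mdeg (η - Finsupp.single j 1) ≤ N := by
        have := mdeg_sub_single hj0
        omega
      obtain ⟨⟨α, δ⟩, hα, hgm, hdec⟩ := ih _ hsub hdN
      refine ⟨(α, δ + Finsupp.single j 1), hα, ?_, ?_⟩
      · intro i hi k hk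
        rcases Finset.mem_union.1 (Finsupp.support_add hk) with hkδ | hkj
        · exact hgm i hi k hkδ
        · have hkj' : k = j := by
            have := Finsupp.support_single_subset hkj
            simpa using this
          subst hkj'
          apply hjmin
          have hαi : α i ≠ 0 := Finsupp.mem_support_iff.1 hi
          have h2 : α i + δ i = (η - Finsupp.single j 1 : Mon n) i := by
            rw [hdec]; rfl
          have h3 : (η - Finsupp.single j 1 : Mon n) i ≤ η i := by
            rw [Finsupp.tsub_apply]; omega
          exact Finsupp.mem_support_iff.2 (by omega)
      · have h1 : η - Finsupp.single j 1 + Finsupp.single j 1 = η :=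
          tsub_add_cancel_of_le (single_le hj0)
        rw [← h1, hdec, add_assoc]

variable (J : Set (Mon n)) in
open Classical in
noncomputable def decP (η : Mon n) : Mon n × Mon n :=
  if h : ∃ p : Mon n × Mon n, p.1 ∈ minGens J ∧ minGeMax p.1 p.2 ∧ η = p.1 + p.2
  then h.choose else (0, 0)

lemma decP_spec {J : Set (Mon n)} (hJ : IsStronglyStable J) {η : Mon n} (hη : η ∈ J) :
    (decP J η).1 ∈ minGens J ∧ minGeMax (decP J η).1 (decP J η).2
      ∧ η = (decP J η).1 + (decP J η).2 := by
  have h := exists_dec hJ η hη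
  rw [decP, dif_pos h]
  exact h.choose_spec

lemma decP_snd_mdeg_le {J : Set (Mon n)} (hJ : IsStronglyStable J) {η : Mon n} (hη : η ∈ J) :
    mdeg ((decP J η).2) ≤ mdeg η := by
  have h := congrArg mdeg (decP_spec hJ hη).2.2
  rw [mdeg_add] at h
  omega

/-! ### The key triangularity lemma -/

lemma delta_lex {J : Set (Mon n)} (hJ : IsMonomialIdeal J) {δ β δ' α' : Mon n}
    (hsum : δ' + α' = δ + β) (hα' : α' ∈ J) (hmm : minGeMax α' δ') (hβ : β ∉ J) :
    lexLt δ' δ := by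
  rcases lex_trichot δ' δ with heq | h | h
  · exfalso
    apply hβ
    rw [heq] at hsum
    have : α' = β := by
      apply add_left_cancel (a := δ)
      exact hsum
    exact this ▸ hα'
  · exact h
  · exfalso
    obtain ⟨t, ht, hgt⟩ := h
    have hpt : ∀ k, δ' k + α' k = δ k + β k := by
      intro k
      have := DFunLike.congr_fun hsum k
      simpa using this
    have htsupp : t ∈ δ'.support := Finsupp.mem_support_iff.2 (by omega)
    have hαlow : ∀ k, k < t → α' k = 0 := by
      intro k hk
      by_contra h0
      exact absurd (hmm k (Finsupp.mem_support_iff.2 h0) t htsupp) (not_le.2 hk)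
    have hle : α' ≤ β := by
      rw [Finsupp.le_def]
      intro k
      rcases lt_trichotomy k t with hk | hk | hk
      · rw [hαlow k hk]; omega
      · subst hk
        have := hpt k
        omega
      · have h1 := hgt k hk
        have h2 := hpt k
        omega
    apply hβ
    have hβeq : β = α' + (β - α') := (add_tsub_cancel_of_le hle).symm
    rw [hβeq]
    exact hJ α' hα' _

/-! ### Module-theoretic layer -/

section Ring

variable {A : Type*} [CommRing A]

/-- The submodule of polynomials supported away from `J`. -/
def NSmod (A : Type*) [CommRing A] (J : Set (Mon n)) :
    Submodule A (MvPolynomial (Fin (n + 1)) A) where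
  carrier := {p | ∀ γ ∈ J, coeff γ p = 0}
  add_mem' := by
    intro p q hp hq γ hγ
    rw [coeff_add, hp γ hγ, hq γ hγ, add_zero]
  zero_mem' := by
    intro γ hγ
    exact coeff_zero _
  smul_mem' := by
    intro c p hp γ hγ
    rw [coeff_smul, hp γ hγ, smul_zero]

lemma monomial_eq_smul (γ : Mon n) (c : A) :
    (monomial γ c : MvPolynomial (Fin (n + 1)) A) = c • monomial γ (1 : A) := by
  rw [smul_monomial, smul_eq_mul, mul_one]

lemma mem_nSpan_iff {J : Set (Mon n)} {p : MvPolynomial (Fin (n + 1)) A} :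
    p ∈ nSpan A J ↔ ∀ γ ∈ J, coeff γ p = 0 := by
  constructor
  · intro hp
    have hle : nSpan A J ≤ NSmod A J := by
      rw [nSpan, Submodule.span_le]
      rintro q ⟨β, hβ, rfl⟩
      intro γ hγ
      rw [coeff_monomial, if_neg (fun h : β = γ => hβ (h ▸ hγ))]
    exact hle hp
  · intro h
    rw [as_sum p]
    apply Submodule.sum_mem
    intro γ hγ
    have hγJ : γ ∉ J := fun hJγ => (mem_support_iff.1 hγ) (h γ hJγ)
    rw [monomial_eq_smul]
    exact Submodule.smul_mem _ _ (Submodule.subset_span ⟨γ, hγJ, rfl⟩)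

variable (J : Set (Mon n)) (F : Mon n → MvPolynomial (Fin (n + 1)) A)

/-- Canonical monomial multiples of the marked set, one for each `η ∈ J`. -/
noncomputable def gF (η : Mon n) : MvPolynomial (Fin (n + 1)) A :=
  monomial ((decP J η).2) (1 : A) * F ((decP J η).1)

/-- The span of the canonical monomial multiples. -/
noncomputable def VS : Submodule A (MvPolynomial (Fin (n + 1)) A) :=
  Submodule.span A (gF J F '' J)

/-- Monomial multiples of the marked set, with arbitrary monomial factors. -/
def MSet : Set (MvPolynomial (Fin (n + 1)) A) :=
  {q | ∃ γ α : Mon n, α ∈ minGens J ∧ q = monomial γ (1 : A) * F α}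

variable {J F}

lemma coeff_gF_self (hJ : IsStronglyStable J) (hF : IsMarkedSet J F) {η : Mon n}
    (hη : η ∈ J) : coeff η (gF J F η) = 1 := by
  obtain ⟨hα, hgm, hdec⟩ := decP_spec hJ hη
  have hpt : ∀ k, η k = (decP J η).1 k + (decP J η).2 k := fun k => by
    simpa using DFunLike.congr_fun hdec k
  rw [gF, coeff_monomial_mul']
  have hle : (decP J η).2 ≤ η := Finsupp.le_def.2 fun k => by have := hpt k; omega
  rw [if_pos hle, one_mul]
  have hsub : η - (decP J η).2 = (decP J η).1 := by
    ext k
    rw [Finsupp.tsub_apply]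
    have := hpt k
    omega
  rw [hsub]
  exact (hF _ hα).1

lemma coeff_gF_structure (hJ : IsStronglyStable J) (hF : IsMarkedSet J F) {η γ : Mon n}
    (hη : η ∈ J) (hγη : γ ≠ η) (hc : coeff γ (gF J F η) ≠ 0) :
    mdeg γ = mdeg η ∧ (γ ∈ J → lexLt ((decP J γ).2) ((decP J η).2)) := by
  obtain ⟨hα, hgm, hdec⟩ := decP_spec hJ hη
  rw [gF, coeff_monomial_mul'] at hc
  by_cases hle : (decP J η).2 ≤ γ
  swap
  · rw [if_neg hle] at hc
    exact absurd rfl hc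
  rw [if_pos hle, one_mul] at hc
  have hγδβ : γ = (decP J η).2 + (γ - (decP J η).2) := (add_tsub_cancel_of_le hle).symm
  have hβsupp : γ - (decP J η).2 ∈ (F ((decP J η).1)).support := mem_support_iff.2 hc
  have hβα : γ - (decP J η).2 ≠ (decP J η).1 := by
    intro h
    apply hγη
    rw [hγδβ, h]
    exact (add_comm _ _).trans hdec.symm
  obtain ⟨hβJ, hβdeg⟩ := (hF _ hα).2 _ hβsupp hβα
  constructor
  · have e1 := congrArg mdeg hγδβ
    rw [mdeg_add, hβdeg] at e1
    have e2 := congrArg mdeg hdec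
    rw [mdeg_add] at e2
    omega
  · intro hγJ
    obtain ⟨hα', hgm', hdec'⟩ := decP_spec hJ hγJ
    refine delta_lex hJ.1 ?_ (minGens_subset J hα') hgm' hβJ
    calc (decP J γ).2 + (decP J γ).1 = γ := (add_comm _ _).trans hdec'.symm
      _ = (decP J η).2 + (γ - (decP J η).2) := hγδβ

lemma VS_le_markedIdeal (hJ : IsStronglyStable J) :
    VS J F ≤ Submodule.restrictScalars A (markedIdeal J F) := by
  rw [VS, Submodule.span_le]
  rintro q ⟨η, hη, rfl⟩
  rw [SetLike.mem_coe, Submodule.restrictScalars_mem]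
  exact Ideal.mul_mem_left _ _ (Ideal.subset_span ⟨_, (decP_spec hJ hη).1, rfl⟩)

lemma monomial_mem_sup (hJ : IsStronglyStable J) (hF : IsMarkedSet J F) (η : Mon n) :
    monomial η (1 : A) ∈ VS J F ⊔ nSpan A J := by
  classical
  suffices H : ∀ N : ℕ, ∀ η : Mon n, η ∈ J → enc (mdeg η + 1) ((decP J η).2) < N →
      monomial η (1 : A) ∈ VS J F ⊔ nSpan A J by
    by_cases hη : η ∈ J
    · exact H (enc (mdeg η + 1) ((decP J η).2) + 1) η hη (Nat.lt_succ_self _)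
    · exact Submodule.mem_sup_right (Submodule.subset_span ⟨η, hη, rfl⟩)
  intro N
  induction N with
  | zero => intro η _ h; omega
  | succ N ih =>
    intro η hη henc
    have hgV : gF J F η ∈ VS J F ⊔ nSpan A J :=
      Submodule.mem_sup_left (Submodule.subset_span ⟨η, hη, rfl⟩)
    have hcoeff : coeff η (gF J F η) = 1 := coeff_gF_self hJ hF hη
    have hrest : gF J F η - monomial η 1 ∈ VS J F ⊔ nSpan A J := by
      rw [as_sum (gF J F η - monomial η 1)]
      apply Submodule.sum_mem
      intro γ hγ
      have hcγ : coeff γ (gF J F η - monomial η 1) ≠ 0 := mem_support_iff.1 hγ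
      have hγη : γ ≠ η := by
        intro h
        subst h
        rw [coeff_sub, hcoeff, coeff_monomial, if_pos rfl, sub_self] at hcγ
        exact hcγ rfl
      have hcg : coeff γ (gF J F η - monomial η 1) = coeff γ (gF J F η) := by
        rw [coeff_sub, coeff_monomial, if_neg (fun h => hγη h.symm), sub_zero]
      have hcg0 : coeff γ (gF J F η) ≠ 0 := by
        rw [← hcg]
        exact hcγ
      rw [monomial_eq_smul]
      apply Submodule.smul_mem
      by_cases hγJ : γ ∈ J
      · obtain ⟨hmd, hlex⟩ := coeff_gF_structure hJ hF hη hγη hcg0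
        apply ih γ hγJ
        have hb : ∀ i, ((decP J γ).2) i < mdeg γ + 1 := fun i =>
          Nat.lt_succ_of_le ((apply_le_mdeg _ i).trans (decP_snd_mdeg_le hJ hγJ))
        have hstrict := enc_lt hb (hlex hγJ)
        rw [hmd] at hstrict ⊢
        omega
      · exact Submodule.mem_sup_right (Submodule.subset_span ⟨γ, hγJ, rfl⟩)
    have hsplit : monomial η (1 : A) = gF J F η - (gF J F η - monomial η 1) := by ring
    rw [hsplit]
    exact Submodule.sub_mem _ hgV hrest

lemma sup_VS_nSpan_eq_top (hJ : IsStronglyStable J) (hF : IsMarkedSet J F) :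
    VS J F ⊔ nSpan A J = ⊤ := by
  rw [eq_top_iff]
  intro p _
  rw [as_sum p]
  apply Submodule.sum_mem
  intro γ _
  rw [monomial_eq_smul]
  exact Submodule.smul_mem _ _ (monomial_mem_sup hJ hF γ)

lemma disjoint_VS_nSpan (hJ : IsStronglyStable J) (hF : IsMarkedSet J F) :
    Disjoint (VS J F) (nSpan A J) := by
  classical
  rw [Submodule.disjoint_def]
  intro p hpV hpN
  rw [VS, Finsupp.mem_span_image_iff_linearCombination] at hpV
  obtain ⟨l, hl, hlp⟩ := hpV
  rw [Finsupp.mem_supported] at hl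
  by_cases hl0 : l = 0
  · rw [← hlp, hl0]
    simp
  · exfalso
    have hT : l.support.Nonempty := Finsupp.support_nonempty_iff.2 hl0
    set B := (l.support.sup fun η => mdeg η) + 1 with hB
    obtain ⟨η₀, hη₀T, hmax⟩ :=
      Finset.exists_max_image l.support (fun η => enc B ((decP J η).2)) hT
    have hη₀J : η₀ ∈ J := hl hη₀T
    have hcoeff : coeff η₀ p = l η₀ := by
      rw [← hlp, Finsupp.linearCombination_apply, Finsupp.sum, coeff_sum]
      rw [Finset.sum_eq_single η₀]
      · rw [coeff_smul, coeff_gF_self hJ hF hη₀J, smul_eq_mul, mul_one]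
      · intro b hb hbne
        rw [coeff_smul]
        suffices h : coeff η₀ (gF J F b) = 0 by rw [h, smul_zero]
        by_contra hc
        have hbJ : b ∈ J := hl hb
        obtain ⟨_, hlex⟩ := coeff_gF_structure hJ hF hbJ (Ne.symm hbne) hc
        have hbound : ∀ i, ((decP J η₀).2) i < B := by
          intro i
          have h1 : ((decP J η₀).2) i ≤ mdeg ((decP J η₀).2) := apply_le_mdeg _ i
          have h2 := decP_snd_mdeg_le hJ hη₀J
          have h3 : mdeg η₀ ≤ l.support.sup fun η => mdeg η := Finset.le_sup hη₀T
          omega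
        have hstrict := enc_lt hbound (hlex hη₀J)
        have hmaxb := hmax b hb
        omega
      · intro h
        exact absurd hη₀T h
    have h0 : coeff η₀ p = 0 := mem_nSpan_iff.1 hpN η₀ hη₀J
    apply Finsupp.mem_support_iff.1 hη₀T
    rw [← hcoeff, h0]

lemma mul_mem_spanMSet (c p : MvPolynomial (Fin (n + 1)) A)
    (hp : p ∈ Submodule.span A (MSet J F)) :
    c * p ∈ Submodule.span A (MSet J F) := by
  induction c using MvPolynomial.induction_on' with
  | add c₁ c₂ ih₁ ih₂ =>
    rw [add_mul]
    exact Submodule.add_mem _ ih₁ ih₂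
  | monomial u a =>
    refine Submodule.span_induction ?_ ?_ ?_ ?_ hp
    · rintro x ⟨γ, α, hα, rfl⟩
      have heq : (monomial u a : MvPolynomial (Fin (n + 1)) A)
          * (monomial γ (1 : A) * F α) = a • (monomial (u + γ) (1 : A) * F α) := by
        rw [← mul_assoc, monomial_mul, mul_one, ← smul_mul_assoc, smul_monomial,
          smul_eq_mul, mul_one]
      rw [heq]
      exact Submodule.smul_mem _ _ (Submodule.subset_span ⟨u + γ, α, hα, rfl⟩)
    · rw [mul_zero]
      exact Submodule.zero_mem _
    · intro x y _ _ hx hy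
      rw [mul_add]
      exact Submodule.add_mem _ hx hy
    · intro r x _ hx
      rw [mul_smul_comm]
      exact Submodule.smul_mem _ _ hx

lemma restrict_markedIdeal_eq :
    Submodule.restrictScalars A (markedIdeal J F) = Submodule.span A (MSet J F) := by
  apply le_antisymm
  · intro p hp
    rw [Submodule.restrictScalars_mem, markedIdeal] at hp
    refine Submodule.span_induction ?_ ?_ ?_ ?_ hp
    · rintro x ⟨α, hα, rfl⟩
      refine Submodule.subset_span ⟨0, α, hα, ?_⟩
      rw [monomial_zero', C_1, one_mul]
    · exact Submodule.zero_mem _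
    · intro x y _ _ hx hy
      exact Submodule.add_mem _ hx hy
    · intro a x _ hx
      rw [smul_eq_mul]
      exact mul_mem_spanMSet _ _ hx
  · rw [Submodule.span_le]
    rintro q ⟨γ, α, hα, rfl⟩
    rw [SetLike.mem_coe, Submodule.restrictScalars_mem]
    exact Ideal.mul_mem_left _ _ (Ideal.subset_span ⟨α, hα, rfl⟩)

end Ring

/-! ### Transfer along the evaluation homomorphism -/

section Transfer

variable {A : Type*} [CommRing A] {J : Set (Mon n)}
variable {𝓕 : Mon n → MvPolynomial (Fin (n + 1)) (ZC J)}
variable {F : Mon n → MvPolynomial (Fin (n + 1)) A}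

lemma generic_isMarkedSet (h𝓕 : IsGenericMarkedSet J 𝓕) : IsMarkedSet J 𝓕 := by
  intro α hα
  obtain ⟨h1, h2, h3⟩ := h𝓕 α hα
  refine ⟨h1, fun β hβ hβα => ?_⟩
  by_contra hc
  exact (mem_support_iff.1 hβ) (h3 β hβα hc)

lemma mapGen (h𝓕 : IsGenericMarkedSet J 𝓕) (hF : IsMarkedSet J F) {α : Mon n}
    (hα : α ∈ minGens J) :
    MvPolynomial.map (evalHom J F : ZC J →+* A) (𝓕 α) = F α := by
  obtain ⟨h1, h2, h3⟩ := h𝓕 α hα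
  obtain ⟨hc1, hc2⟩ := hF α hα
  apply MvPolynomial.ext
  intro γ
  rw [coeff_map]
  rcases eq_or_ne γ α with rfl | hne
  · rw [h1, hc1]
    exact map_one _
  · by_cases hcase : γ ∉ J ∧ mdeg γ = mdeg α
    · rw [h2 γ hcase, map_neg]
      simp only [evalHom, eval₂Hom_X']
      rw [neg_neg]
    · rw [h3 γ hne hcase, map_zero]
      symm
      by_contra h0
      exact hcase ((hc2 γ (mem_support_iff.2 h0) hne))

lemma map_mem_VS (hJ : IsStronglyStable J) (h𝓕 : IsGenericMarkedSet J 𝓕)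
    (hF : IsMarkedSet J F) {v : MvPolynomial (Fin (n + 1)) (ZC J)} (hv : v ∈ VS J 𝓕) :
    MvPolynomial.map (evalHom J F : ZC J →+* A) v ∈ VS J F := by
  refine Submodule.span_induction ?_ ?_ ?_ ?_ hv
  · rintro x ⟨η, hη, rfl⟩
    have hη' : η ∈ J := hη
    have heq : MvPolynomial.map (evalHom J F : ZC J →+* A) (gF J 𝓕 η) = gF J F η := by
      rw [gF, map_mul, map_monomial, map_one, mapGen h𝓕 hF (decP_spec hJ hη').1, gF]
    rw [heq]
    exact Submodule.subset_span ⟨η, hη', rfl⟩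
  · rw [map_zero]
    exact Submodule.zero_mem _
  · intro x y _ _ hx hy
    rw [map_add]
    exact Submodule.add_mem _ hx hy
  · intro a x _ hx
    rw [smul_eq_C_mul, map_mul, map_C, ← smul_eq_C_mul]
    exact Submodule.smul_mem _ _ hx

end Transfer


end MBAux
end

open MarkedFamilies in
/-- a `J`-marked set is a `J`-marked basis iff its evaluation
homomorphism `φ_{F_J} : ℤ[C] → A` kills the ideal `𝔦_J`. -/
theorem stmt_13 {n : ℕ} (J : Set (Mon n)) (hJ : IsStronglyStable J)
    (𝓕 : Mon n → MvPolynomial (Fin (n + 1)) (ZC J)) (h𝓕 : IsGenericMarkedSet J 𝓕)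
    {A : Type*} [CommRing A] [IsNoetherianRing A]
    (F : Mon n → MvPolynomial (Fin (n + 1)) A) (hF : IsMarkedSet J F) :
    IsMarkedBasis J F ↔ markedCoeffIdeal J 𝓕 ≤ RingHom.ker (evalHom J F) := by
  classical
  have h𝓕ms : IsMarkedSet J 𝓕 := MBAux.generic_isMarkedSet h𝓕
  constructor
  · intro hMB
    rw [markedCoeffIdeal, Ideal.span_le]
    rintro c ⟨p, hpI, hpN, γ, rfl⟩
    rw [SetLike.mem_coe, RingHom.mem_ker]
    have hΦI : MvPolynomial.map (evalHom J F) p ∈ markedIdeal J F := by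
      have h1 : MvPolynomial.map (evalHom J F) p
          ∈ Ideal.map (MvPolynomial.map (evalHom J F)) (markedIdeal J 𝓕) :=
        Ideal.mem_map_of_mem _ hpI
      rw [markedIdeal, Ideal.map_span, Set.image_image] at h1
      rw [markedIdeal]
      rwa [show ((fun α => MvPolynomial.map (evalHom J F) (𝓕 α)) '' minGens J)
          = F '' minGens J from
        Set.image_congr fun α hα => MBAux.mapGen h𝓕 hF hα] at h1
    have hΦN : MvPolynomial.map (evalHom J F) p ∈ nSpan A J :=
      MBAux.mem_nSpan_iff.2 fun γ' hγ' => by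
        rw [MvPolynomial.coeff_map, MBAux.mem_nSpan_iff.1 hpN γ' hγ', map_zero]
    have hzero : MvPolynomial.map (evalHom J F) p = 0 :=
      Submodule.disjoint_def.1 hMB.2.disjoint _
        (by rw [Submodule.restrictScalars_mem]; exact hΦI) hΦN
    have : (evalHom J F) (p.coeff γ) = MvPolynomial.coeff γ (MvPolynomial.map (evalHom J F) p) :=
      (MvPolynomial.coeff_map _ _ _).symm
    rw [this, hzero, MvPolynomial.coeff_zero]
  · intro hker
    refine ⟨hF, ?_, ?_⟩
    · -- Disjointness
      have hRED : ∀ q ∈ MBAux.MSet J F, q ∈ MBAux.VS J F := by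
        rintro q ⟨γ, α, hα, rfl⟩
        have hqZ : (MvPolynomial.monomial γ (1 : ZC J) * 𝓕 α)
            ∈ MBAux.VS J 𝓕 ⊔ nSpan (ZC J) J := by
          rw [MBAux.sup_VS_nSpan_eq_top hJ h𝓕ms]
          trivial
        rw [Submodule.mem_sup] at hqZ
        obtain ⟨v, hv, r, hr, hvr⟩ := hqZ
        have hrI : r ∈ markedIdeal J 𝓕 := by
          have h1 : (MvPolynomial.monomial γ (1 : ZC J) * 𝓕 α) ∈ markedIdeal J 𝓕 :=
            Ideal.mul_mem_left _ _ (Ideal.subset_span ⟨α, hα, rfl⟩)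
          have h2 : v ∈ markedIdeal J 𝓕 := by
            have := MBAux.VS_le_markedIdeal (F := 𝓕) hJ hv
            rwa [Submodule.restrictScalars_mem] at this
          have hreq : r = (MvPolynomial.monomial γ (1 : ZC J) * 𝓕 α) - v :=
            eq_sub_of_add_eq' hvr
          rw [hreq]
          exact Ideal.sub_mem _ h1 h2
        have hΦr : MvPolynomial.map (evalHom J F : ZC J →+* A) r = 0 := by
          apply MvPolynomial.ext
          intro m
          rw [MvPolynomial.coeff_map, MvPolynomial.coeff_zero]
          exact RingHom.mem_ker.1 (hker (Ideal.subset_span ⟨r, hrI, hr, m, rfl⟩))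
        have hΦq : MvPolynomial.map (evalHom J F : ZC J →+* A)
            (MvPolynomial.monomial γ (1 : ZC J) * 𝓕 α)
              = MvPolynomial.monomial γ (1 : A) * F α := by
          rw [map_mul, MvPolynomial.map_monomial, map_one, MBAux.mapGen h𝓕 hF hα]
        have hfin : MvPolynomial.monomial γ (1 : A) * F α
            = MvPolynomial.map (evalHom J F : ZC J →+* A) v := by
          rw [← hΦq, ← hvr, map_add, hΦr, add_zero]
        rw [hfin]
        exact MBAux.map_mem_VS hJ h𝓕 hF hv
      have hle : Submodule.restrictScalars A (markedIdeal J F) ≤ MBAux.VS J F := by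
        rw [MBAux.restrict_markedIdeal_eq]
        exact Submodule.span_le.2 hRED
      exact Disjoint.mono_left hle (MBAux.disjoint_VS_nSpan hJ hF)
    · -- Codisjointness
      rw [codisjoint_iff, eq_top_iff, ← MBAux.sup_VS_nSpan_eq_top hJ hF]
      exact sup_le_sup_right (MBAux.VS_le_markedIdeal hJ) _
end

section
/- Let J be a strongly stable monomial ideal and let m be the maximum degree of monomials in B_J. With 𝓕_J the generic J-marked set in ℤ[C][x₀,…,xₙ], 𝓘 = (𝓕_J), and 𝔦_J ⊆ ℤ[C] the ideal generated by the x-coefficients of all polynomials in 𝓘 ∩ ⟨N(J)⟩, the ideal 𝔦_J is already generated by the x-coefficients of the homogeneous polynomials in (𝓘 ∩ ⟨N(J)⟩)_s for the finitely many degrees s ≤ m+1. -/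
open MvPolynomial

namespace MarkedFamilies
variable {n : ℕ}

-- Section A : lexLt basics
theorem lexLt_iff (a b : Mon n) : lexLt a b ↔ Finsupp.Lex (· > ·) (· < ·) a b := by
  constructor
  · rintro ⟨i, h1, h2⟩; exact ⟨i, fun j hj => h2 j hj, h1⟩
  · rintro ⟨i, h1, h2⟩; exact ⟨i, h2, fun j hj => h1 j hj⟩

theorem lexLt_wf : WellFounded (lexLt (n := n)) := by
  have h := Finsupp.Lex.wellFounded_of_finite (α := Fin (n+1)) (N := ℕ) (· > ·)
    (s := (· < ·)) (Nat.lt_wfRel.wf)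
  exact Subrelation.wf (fun {a b} hab => (lexLt_iff a b).1 hab) h

theorem lexLt_trichotomy (a b : Mon n) : lexLt a b ∨ a = b ∨ lexLt b a := by
  by_cases hab : a = b
  · exact Or.inr (Or.inl hab)
  · have hs : ((a.support ∪ b.support).filter (fun i => a i ≠ b i)).Nonempty := by
      have : ∃ i, a i ≠ b i := by
        by_contra h; push_neg at h; exact hab (Finsupp.ext h)
      obtain ⟨i, hi⟩ := this
      refine ⟨i, Finset.mem_filter.2 ⟨?_, hi⟩⟩
      rcases eq_or_ne (a i) 0 with h0 | h0
      · exact Finset.mem_union_right _ (Finsupp.mem_support_iff.2 (by omega))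
      · exact Finset.mem_union_left _ (Finsupp.mem_support_iff.2 h0)
    set s := (a.support ∪ b.support).filter (fun i => a i ≠ b i)
    set i := s.max' hs with hidef
    have hi : a i ≠ b i := (Finset.mem_filter.1 (s.max'_mem hs)).2
    have htop : ∀ j, i < j → a j = b j := by
      intro j hj
      by_contra hne
      have hjs : j ∈ s := by
        refine Finset.mem_filter.2 ⟨?_, hne⟩
        rcases eq_or_ne (a j) 0 with h0 | h0
        · exact Finset.mem_union_right _ (Finsupp.mem_support_iff.2 (by omega))
        · exact Finset.mem_union_left _ (Finsupp.mem_support_iff.2 h0)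
      exact absurd (s.le_max' j hjs) (not_le.2 hj)
    rcases lt_or_gt_of_ne hi with h | h
    · exact Or.inl ⟨i, h, htop⟩
    · exact Or.inr (Or.inr ⟨i, h, fun j hj => (htop j hj).symm⟩)

theorem lexLt_asymm {a b : Mon n} (h1 : lexLt a b) (h2 : lexLt b a) : False := by
  obtain ⟨i, hi, hti⟩ := h1
  obtain ⟨k, hk, htk⟩ := h2
  rcases lt_trichotomy i k with h | h | h
  · exact absurd (hti k h) (by omega)
  · subst h; omega
  · exact absurd (htk i h) (by omega)

theorem lexLt_irrefl (a : Mon n) : ¬ lexLt a a := fun h => lexLt_asymm h h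

theorem lexLt_trans {a b c : Mon n} (h1 : lexLt a b) (h2 : lexLt b c) : lexLt a c := by
  obtain ⟨i, hi, hti⟩ := h1
  obtain ⟨k, hk, htk⟩ := h2
  rcases lt_trichotomy i k with h | h | h
  · exact ⟨k, by rw [hti k h]; exact hk, fun j hj => by rw [hti j (h.trans hj), htk j hj]⟩
  · subst h; exact ⟨i, by omega, fun j hj => by rw [hti j hj, htk j hj]⟩
  · exact ⟨i, by rw [← htk i h]; exact hi, fun j hj => by rw [hti j hj, htk j (h.trans hj)]⟩

theorem lexLt_add_left {a b : Mon n} (c : Mon n) (h : lexLt a b) : lexLt (c + a) (c + b) := by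
  obtain ⟨i, hi, ht⟩ := h
  exact ⟨i, by simp [Finsupp.add_apply]; omega, fun j hj => by simp [Finsupp.add_apply, ht j hj]⟩


-- Section B
section SB
theorem mdeg_eq_sum (a : Mon n) : mdeg a = ∑ i, a i := by
  rw [mdeg, Finsupp.sum_fintype]; intro i; rfl

theorem mdeg_add (a b : Mon n) : mdeg (a + b) = mdeg a + mdeg b := by
  simp [mdeg_eq_sum, Finsupp.add_apply, Finset.sum_add_distrib]

theorem mem_of_le {J : Set (Mon n)} (hJ : IsMonomialIdeal J) {a b : Mon n}
    (ha : a ∈ J) (hab : a ≤ b) : b ∈ J := by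
  have : b = a + (b - a) := by
    ext i
    have := Finsupp.le_def.1 hab i
    simp [Finsupp.add_apply, Finsupp.tsub_apply]
    omega
  rw [this]; exact hJ a ha _

theorem minGens_subset {J : Set (Mon n)} : minGens J ⊆ J := fun _ h => h.1

theorem exists_minGen_le {J : Set (Mon n)} (hJ : IsMonomialIdeal J) {γ : Mon n}
    (hγ : γ ∈ J) : ∃ α ∈ minGens J, α ≤ γ := by
  suffices H : ∀ (d : ℕ) (γ : Mon n), γ ∈ J → mdeg γ ≤ d → ∃ α ∈ minGens J, α ≤ γ from
    H (mdeg γ) γ hγ le_rfl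
  intro d
  induction d with
  | zero =>
    intro γ hγ hd
    refine ⟨γ, ⟨hγ, fun j hj => ?_⟩, le_refl _⟩
    exfalso
    rw [mdeg_eq_sum] at hd
    have : γ j ≤ 0 := le_trans (Finset.single_le_sum (fun i _ => Nat.zero_le _)
      (Finset.mem_univ j)) hd
    omega
  | succ d ih =>
  intro γ hγ hd
  by_cases hmin : γ ∈ minGens J
  · exact ⟨γ, hmin, le_refl _⟩
  · have : ∃ j : Fin (n+1), γ j ≠ 0 ∧ γ - Finsupp.single j 1 ∈ J := by
      by_contra h; push_neg at h
      exact hmin ⟨hγ, fun j hj => (h j hj)⟩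
    obtain ⟨j, hj0, hjJ⟩ := this
    have hdlt : mdeg (γ - Finsupp.single j 1) ≤ d := by
      have hlt : mdeg (γ - Finsupp.single j 1) < mdeg γ := by
        simp only [mdeg_eq_sum, Finsupp.tsub_apply]
        have hj' : γ j - (Finsupp.single j 1) j < γ j := by
          simp [Finsupp.single_apply] <;> omega
        apply Finset.sum_lt_sum (fun i _ => ?_) ⟨j, Finset.mem_univ j, hj'⟩
        exact Nat.sub_le _ _
      omega
    obtain ⟨α, hα, hle⟩ := ih _ hjJ hdlt
    exact ⟨α, hα, hle.trans (Finsupp.le_def.2 fun i => by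
      simp only [Finsupp.tsub_apply]; exact Nat.sub_le _ _)⟩

theorem minGens_le_antisymm {J : Set (Mon n)} (hJ : IsMonomialIdeal J) {α b : Mon n}
    (hα : α ∈ minGens J) (hb : b ∈ J) (hle : b ≤ α) : b = α := by
  by_contra hne
  have : ∃ j, b j < α j := by
    by_contra h; push_neg at h
    exact hne (le_antisymm hle (Finsupp.le_def.2 h))
  obtain ⟨j, hj⟩ := this
  have h1 : b ≤ α - Finsupp.single j 1 := by
    intro i
    have h2 := Finsupp.le_def.1 hle i
    simp only [Finsupp.tsub_apply, Finsupp.single_apply]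
    by_cases hij : j = i
    · subst hij; simp; omega
    · simp [hij]; omega
  exact hα.2 j (by omega) (mem_of_le hJ hb h1)

def IsCanon (J : Set (Mon n)) (γ α δ : Mon n) : Prop :=
  α ∈ minGens J ∧ minGeMax α δ ∧ γ = α + δ

theorem canon_ex {J : Set (Mon n)} (hJ : IsStronglyStable J) {γ : Mon n} (hγ : γ ∈ J) :
    ∃ α δ : Mon n, IsCanon J γ α δ := by
  induction γ using WellFounded.induction lexLt_wf with
  | _ γ ih =>
  by_cases hmin : γ ∈ minGens J
  · refine ⟨γ, 0, hmin, ?_, (add_zero γ).symm⟩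
    intro i _ j hj; simp at hj
  · classical
    have hne : (Finset.univ.filter
        (fun j : Fin (n+1) => γ j ≠ 0 ∧ γ - Finsupp.single j 1 ∈ J)).Nonempty := by
      have : ∃ j : Fin (n+1), γ j ≠ 0 ∧ γ - Finsupp.single j 1 ∈ J := by
        by_contra h; push_neg at h
        exact hmin ⟨hγ, fun j hj => (h j hj)⟩
      obtain ⟨j, hj⟩ := this
      exact ⟨j, Finset.mem_filter.2 ⟨Finset.mem_univ _, hj⟩⟩
    obtain ⟨j, hjmem, hjmin⟩ : ∃ j, j ∈ (Finset.univ.filter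
        (fun j : Fin (n+1) => γ j ≠ 0 ∧ γ - Finsupp.single j 1 ∈ J)) ∧
        ∀ i ∈ (Finset.univ.filter
        (fun j : Fin (n+1) => γ j ≠ 0 ∧ γ - Finsupp.single j 1 ∈ J)), j ≤ i :=
      ⟨_, Finset.min'_mem _ hne, fun i hi => Finset.min'_le _ i hi⟩
    obtain ⟨-, hj0, hjJ⟩ := Finset.mem_filter.1 hjmem
    have hlt : lexLt (γ - Finsupp.single j 1) γ := by
      refine ⟨j, ?_, fun l hl => ?_⟩
      · simp [Finsupp.tsub_apply, Finsupp.single_apply]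
        omega
      · have hne2 : j ≠ l := Fin.ne_of_lt hl
        simp [Finsupp.tsub_apply, Finsupp.single_apply, hne2]
    obtain ⟨α, δ', hαmem, hmm, heq⟩ := ih _ hlt hjJ
    have hptγ : ∀ l, γ l = α l + δ' l + (Finsupp.single j 1) l := by
      intro l
      have h1 : γ l - (Finsupp.single j 1) l = α l + δ' l := by
        rw [← Finsupp.tsub_apply, heq]; simp [Finsupp.add_apply]
      simp only [Finsupp.single_apply] at h1 ⊢
      by_cases hjl : j = l
      · simp only [if_pos hjl] at h1 ⊢
        have : γ l ≠ 0 := by rw [← hjl]; exact hj0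
        omega
      · simp only [if_neg hjl] at h1 ⊢; omega
    refine ⟨α, δ' + Finsupp.single j 1, hαmem, ?_, ?_⟩
    · intro i hi l hl
      rw [Finsupp.mem_support_iff] at hl
      by_cases hlj : l = j
      · -- need j ≤ i for all i ∈ supp α
        subst hlj
        by_contra hcon
        push_neg at hcon
        have hiα : α i ≠ 0 := Finsupp.mem_support_iff.1 hi
        have hij : i ≠ l := Fin.ne_of_lt hcon
        have hss : α - Finsupp.single i 1 + Finsupp.single l 1 ∈ J :=
          hJ.2 α hαmem.1 i hiα l hcon
        have hupd : γ - Finsupp.single i 1 ∈ J := by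
          have heq2 : γ - Finsupp.single i 1 =
              (α - Finsupp.single i 1 + Finsupp.single l 1) + δ' := by
            ext k
            have hpt := hptγ k
            simp only [Finsupp.tsub_apply, Finsupp.add_apply, Finsupp.single_apply] at hpt ⊢
            by_cases h1 : i = k
            · have h3 : ¬ l = k := fun h => hij (h1.symm ▸ h.symm ▸ rfl)
              have hiαk : α k ≠ 0 := h1 ▸ hiα
              simp only [if_pos h1, if_neg h3] at hpt ⊢
              omega
            · simp only [if_neg h1] at hpt ⊢
              by_cases h3 : l = k
              · simp only [if_pos h3] at hpt ⊢; omega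
              · simp only [if_neg h3] at hpt ⊢; omega
          rw [heq2]; exact hJ.1 _ hss δ'
        have hγi : γ i ≠ 0 := by
          have h4 := hptγ i
          omega
        have := hjmin i (Finset.mem_filter.2 ⟨Finset.mem_univ _, hγi, hupd⟩)
        exact absurd hcon (by omega)
      · have hjl : ¬ j = l := fun h => hlj h.symm
        have hδ'l : δ' l ≠ 0 := by
          intro h0
          apply hl
          simp [Finsupp.add_apply, Finsupp.single_apply, h0, hjl]
        exact hmm i hi l (Finsupp.mem_support_iff.2 hδ'l)
    · ext l
      have := hptγ l
      simp only [Finsupp.add_apply]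
      omega

theorem canon_B0 {J : Set (Mon n)} {γ δ₀ β α₁ δ₁ : Mon n}
    (hcan : IsCanon J γ α₁ δ₁) (heq : γ = δ₀ + β) : lexLt δ₁ δ₀ ∨ α₁ ≤ β := by
  obtain ⟨hα₁, hmm, hγeq⟩ := hcan
  rcases lexLt_trichotomy δ₁ δ₀ with h | h | h
  · exact Or.inl h
  · subst h
    right
    have : α₁ + δ₁ = β + δ₁ := by
      rw [← hγeq, heq, add_comm]
    exact le_of_eq (add_right_cancel this)
  · right
    obtain ⟨k, hk, htop⟩ := h
    have hpt : ∀ l, α₁ l + δ₁ l = δ₀ l + β l := by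
      intro l
      have h1 : γ l = α₁ l + δ₁ l := by rw [hγeq]; simp [Finsupp.add_apply]
      have h2 : γ l = δ₀ l + β l := by rw [heq]; simp [Finsupp.add_apply]
      omega
    intro l
    rcases lt_trichotomy l k with hlk | hlk | hlk
    · -- α₁ l = 0
      have : α₁ l = 0 := by
        by_contra h0
        have hks : k ∈ δ₁.support := Finsupp.mem_support_iff.2 (by omega)
        have := hmm l (Finsupp.mem_support_iff.2 h0) k hks
        omega
      omega
    · subst hlk; have := hpt l; omega
    · have := htop l hlk; have := hpt l; omega

theorem canon_unique {J : Set (Mon n)} (hJ : IsStronglyStable J) {γ α δ α' δ' : Mon n}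
    (h1 : IsCanon J γ α δ) (h2 : IsCanon J γ α' δ') : α = α' ∧ δ = δ' := by
  have d1 := canon_B0 h1 (heq := (by rw [h2.2.2, add_comm] : γ = δ' + α'))
  have d2 := canon_B0 h2 (heq := (by rw [h1.2.2, add_comm] : γ = δ + α))
  have hαeq : α = α' := by
    rcases d1 with h | h
    · rcases d2 with h' | h'
      · exact absurd h (fun hh => lexLt_asymm hh h')
      · exact (minGens_le_antisymm hJ.1 h1.1 (minGens_subset h2.1) h').symm
    · exact minGens_le_antisymm hJ.1 h2.1 (minGens_subset h1.1) h
  subst hαeq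
  refine ⟨rfl, ?_⟩
  have : α + δ = α + δ' := by rw [← h1.2.2, h2.2.2]
  exact add_left_cancel this

open scoped Classical in
/-- canonical generator part -/
noncomputable def cα (J : Set (Mon n)) (hJ : IsStronglyStable J) (γ : Mon n) : Mon n :=
  if h : γ ∈ J then (canon_ex hJ h).choose else 0

open scoped Classical in
/-- canonical multiplier part -/
noncomputable def cδ (J : Set (Mon n)) (hJ : IsStronglyStable J) (γ : Mon n) : Mon n :=
  if h : γ ∈ J then (canon_ex hJ h).choose_spec.choose else 0

variable (J : Set (Mon n)) (hJ : IsStronglyStable J)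

theorem canon_spec {γ : Mon n} (hγ : γ ∈ J) : IsCanon J γ (cα J hJ γ) (cδ J hJ γ) := by
  rw [cα, cδ]
  rw [dif_pos hγ, dif_pos hγ]
  exact (canon_ex hJ hγ).choose_spec.choose_spec

theorem canon_eq {γ α δ : Mon n} (hγ : γ ∈ J) (h : IsCanon J γ α δ) :
    cα J hJ γ = α ∧ cδ J hJ γ = δ :=
  canon_unique hJ (canon_spec J hJ hγ) h

theorem lemB' {γ δ₀ β : Mon n} (hγ : γ ∈ J) (heq : γ = δ₀ + β) (hβ : β ∉ J) :
    lexLt (cδ J hJ γ) δ₀ := by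
  rcases canon_B0 (canon_spec J hJ hγ) heq with h | h
  · exact h
  · exact absurd (mem_of_le hJ.1 (minGens_subset (canon_spec J hJ hγ).1) h) hβ

theorem lemB'' {α : Mon n} (hα : α ∈ minGens J) {i j : Fin (n+1)}
    (hi : α i ≠ 0) (hij : i < j) :
    lexLt (cδ J hJ (Finsupp.single j 1 + α)) (Finsupp.single j 1) := by
  have hγ : Finsupp.single j 1 + α ∈ J := by
    rw [add_comm]; exact hJ.1 α (minGens_subset hα) _
  rcases canon_B0 (canon_spec J hJ hγ) rfl with h | h
  · exact h
  · exfalso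
    have hcαJ : cα J hJ _ ∈ J := minGens_subset (canon_spec J hJ hγ).1
    have heq : cα J hJ (Finsupp.single j 1 + α) = α :=
      minGens_le_antisymm hJ.1 hα hcαJ h
    have hspec := canon_spec J hJ hγ
    have hδ : cδ J hJ (Finsupp.single j 1 + α) = Finsupp.single j 1 := by
      have h1 := hspec.2.2
      rw [heq] at h1
      have : α + Finsupp.single j 1 = α + cδ J hJ (Finsupp.single j 1 + α) := by
        rw [← h1, add_comm]
      exact (add_left_cancel this).symm
    have hmm := hspec.2.1
    rw [heq, hδ] at hmm
    have := hmm i (Finsupp.mem_support_iff.2 hi) j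
      (Finsupp.mem_support_iff.2 (by simp [Finsupp.single_apply]))
    omega


end SB

-- Section C
theorem gen_support {J : Set (Mon n)} {𝓕 : Mon n → MvPolynomial (Fin (n + 1)) (ZC J)}
    (h𝓕 : IsGenericMarkedSet J 𝓕) {α ε : Mon n}
    (hα : α ∈ minGens J) (hε : (𝓕 α).coeff ε ≠ 0) (hne : ε ≠ α) :
    ε ∉ J ∧ mdeg ε = mdeg α := by
  by_contra h
  exact hε ((h𝓕 α hα).2.2 ε hne h)

/-- the well-founded relation for the normal form recursion -/
def nfRel (J : Set (Mon n)) (hJ : IsStronglyStable J) (a b : Mon n) : Prop :=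
  lexLt (cδ J hJ a) (cδ J hJ b)

theorem nfRel_wf (J : Set (Mon n)) (hJ : IsStronglyStable J) :
    WellFounded (nfRel J hJ) := InvImage.wf _ lexLt_wf

open scoped Classical in
/-- body of the normal form recursion -/
noncomputable def nfBody (J : Set (Mon n)) (hJ : IsStronglyStable J)
    (𝓕 : Mon n → MvPolynomial (Fin (n + 1)) (ZC J)) (h𝓕 : IsGenericMarkedSet J 𝓕)
    (γ : Mon n) (ih : ∀ γ' : Mon n, nfRel J hJ γ' γ → MvPolynomial (Fin (n + 1)) (ZC J)) :
    MvPolynomial (Fin (n + 1)) (ZC J) :=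
  if hγ : γ ∈ J then
    - ∑ ε ∈ ((𝓕 (cα J hJ γ)).support.erase (cα J hJ γ)).attach,
        ((𝓕 (cα J hJ γ)).coeff ε.1) •
          (if h2 : (cδ J hJ γ + ε.1) ∈ J then
             ih (cδ J hJ γ + ε.1)
               (lemB' J hJ h2 rfl
                 (gen_support h𝓕 (canon_spec J hJ hγ).1
                   (MvPolynomial.mem_support_iff.1 (Finset.mem_of_mem_erase ε.2))
                   (Finset.ne_of_mem_erase ε.2)).1)
           else monomial (cδ J hJ γ + ε.1) (1 : ZC J))
  else monomial γ (1 : ZC J)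

/-- normal form of a monomial modulo the marked set -/
noncomputable def nf (J : Set (Mon n)) (hJ : IsStronglyStable J)
    (𝓕 : Mon n → MvPolynomial (Fin (n + 1)) (ZC J)) (h𝓕 : IsGenericMarkedSet J 𝓕) :
    Mon n → MvPolynomial (Fin (n + 1)) (ZC J) :=
  (nfRel_wf J hJ).fix (nfBody J hJ 𝓕 h𝓕)

theorem nf_unfold (J : Set (Mon n)) (hJ : IsStronglyStable J)
    (𝓕 : Mon n → MvPolynomial (Fin (n + 1)) (ZC J)) (h𝓕 : IsGenericMarkedSet J 𝓕)
    (γ : Mon n) :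
    nf J hJ 𝓕 h𝓕 γ = nfBody J hJ 𝓕 h𝓕 γ (fun γ' _ => nf J hJ 𝓕 h𝓕 γ') :=
  WellFounded.fix_eq _ _ γ

theorem nf_not_mem (J : Set (Mon n)) (hJ : IsStronglyStable J)
    (𝓕 : Mon n → MvPolynomial (Fin (n + 1)) (ZC J)) (h𝓕 : IsGenericMarkedSet J 𝓕)
    {γ : Mon n} (hγ : γ ∉ J) : nf J hJ 𝓕 h𝓕 γ = monomial γ 1 := by
  rw [nf_unfold, nfBody, dif_neg hγ]

theorem nf_mem (J : Set (Mon n)) (hJ : IsStronglyStable J)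
    (𝓕 : Mon n → MvPolynomial (Fin (n + 1)) (ZC J)) (h𝓕 : IsGenericMarkedSet J 𝓕)
    {γ : Mon n} (hγ : γ ∈ J) :
    nf J hJ 𝓕 h𝓕 γ = - ∑ ε ∈ ((𝓕 (cα J hJ γ)).support.erase (cα J hJ γ)),
      ((𝓕 (cα J hJ γ)).coeff ε) • nf J hJ 𝓕 h𝓕 (cδ J hJ γ + ε) := by
  rw [nf_unfold, nfBody, dif_pos hγ]
  rw [← Finset.sum_attach ((𝓕 (cα J hJ γ)).support.erase (cα J hJ γ))
    (fun ε => ((𝓕 (cα J hJ γ)).coeff ε) • nf J hJ 𝓕 h𝓕 (cδ J hJ γ + ε))]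
  congr 1
  apply Finset.sum_congr rfl
  intro ε _
  congr 1
  by_cases h2 : (cδ J hJ γ + ε.1) ∈ J
  · rw [dif_pos h2]
  · rw [dif_neg h2, nf_not_mem J hJ 𝓕 h𝓕 h2]


-- === Section D ===

section D
variable (J : Set (Mon n)) (hJ : IsStronglyStable J)
  (𝓕 : Mon n → MvPolynomial (Fin (n + 1)) (ZC J)) (h𝓕 : IsGenericMarkedSet J 𝓕)

/-- span of marked multiples with multiplier lex-bounded by `d` -/
noncomputable def Wle (d : Mon n) : Submodule (ZC J) (MvPolynomial (Fin (n + 1)) (ZC J)) :=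
  Submodule.span (ZC J) {p | ∃ α ∈ minGens J, ∃ δ' : Mon n, minGeMax α δ' ∧
    (lexLt δ' d ∨ δ' = d) ∧ p = monomial δ' 1 * 𝓕 α}

theorem Wle_mono {d1 d2 : Mon n} (h : lexLt d1 d2 ∨ d1 = d2) :
    Wle J 𝓕 d1 ≤ Wle J 𝓕 d2 := by
  apply Submodule.span_mono
  rintro p ⟨α, hα, δ', hmm, hlt, rfl⟩
  refine ⟨α, hα, δ', hmm, ?_, rfl⟩
  rcases hlt with h1 | h1
  · rcases h with h2 | h2
    · exact Or.inl (lexLt_trans h1 h2)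
    · exact Or.inl (h2 ▸ h1)
  · subst h1; exact h

/-- the marked polynomial written as a sum of monomials over its support -/
theorem marked_expand (h𝓕 : IsGenericMarkedSet J 𝓕) {α : Mon n} (hα : α ∈ minGens J)
    (δ : Mon n) :
    monomial δ (1 : ZC J) * 𝓕 α = monomial (δ + α) 1 +
      ∑ ε ∈ ((𝓕 α).support.erase α), ((𝓕 α).coeff ε) • monomial (δ + ε) 1 := by
  have hsupp : α ∈ (𝓕 α).support := by
    rw [MvPolynomial.mem_support_iff, (h𝓕 α hα).1]; exact one_ne_zero
  have hexp : monomial δ (1 : ZC J) * 𝓕 α =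
      ∑ ε ∈ insert α ((𝓕 α).support.erase α),
        monomial δ (1 : ZC J) * monomial ε ((𝓕 α).coeff ε) := by
    conv_lhs => rw [(𝓕 α).as_sum, ← Finset.insert_erase hsupp]
    rw [Finset.mul_sum]
  rw [hexp, Finset.sum_insert (Finset.notMem_erase _ _)]
  congr 1
  · simp [MvPolynomial.monomial_mul, (h𝓕 α hα).1]
  · apply Finset.sum_congr rfl
    intro ε _
    simp [MvPolynomial.monomial_mul, MvPolynomial.smul_monomial]

/-- main structural properties of `nf`, proved by well-founded induction -/
theorem nf_good : ∀ γ : Mon n,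
    (∀ ε : Mon n, (nf J hJ 𝓕 h𝓕 γ).coeff ε ≠ 0 → ε ∉ J ∧ mdeg ε = mdeg γ) ∧
    (γ ∈ J → monomial γ 1 - nf J hJ 𝓕 h𝓕 γ ∈ Wle J 𝓕 (cδ J hJ γ)) := by
  intro γ
  induction γ using WellFounded.induction (nfRel_wf J hJ) with
  | _ γ ih =>
  by_cases hγ : γ ∈ J
  · obtain ⟨hα₀, hmm₀, hdec⟩ := canon_spec J hJ hγ
    set α₀ := cα J hJ γ with hα₀def
    set δ₀ := cδ J hJ γ with hδ₀def
    set S := ((𝓕 α₀).support.erase α₀) with hSdef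
    have hεprop : ∀ ε ∈ S, ε ∉ J ∧ mdeg ε = mdeg α₀ := fun ε hε =>
      gen_support h𝓕 hα₀ (MvPolynomial.mem_support_iff.1 (Finset.mem_of_mem_erase hε))
        (Finset.ne_of_mem_erase hε)
    have hrel : ∀ ε ∈ S, δ₀ + ε ∈ J → nfRel J hJ (δ₀ + ε) γ := fun ε hε h2 =>
      lemB' J hJ h2 rfl (hεprop ε hε).1
    constructor
    · intro ε' hcoeff
      rw [nf_mem J hJ 𝓕 h𝓕 hγ] at hcoeff
      rw [MvPolynomial.coeff_neg, neg_ne_zero, MvPolynomial.coeff_sum] at hcoeff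
      obtain ⟨ε, hεS, hne⟩ := Finset.exists_ne_zero_of_sum_ne_zero hcoeff
      rw [MvPolynomial.coeff_smul] at hne
      have hnf : (nf J hJ 𝓕 h𝓕 (δ₀ + ε)).coeff ε' ≠ 0 := fun h0 => by
        rw [h0, smul_zero] at hne; exact hne rfl
      have hdeg : mdeg (δ₀ + ε) = mdeg γ := by
        rw [mdeg_add, (hεprop ε hεS).2, hdec, mdeg_add, add_comm]
      by_cases h2 : (δ₀ + ε) ∈ J
      · obtain ⟨hA, -⟩ := ih _ (hrel ε hεS h2)
        obtain ⟨h3, h4⟩ := hA ε' hnf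
        exact ⟨h3, by rw [h4, hdeg]⟩
      · rw [nf_not_mem J hJ 𝓕 h𝓕 h2, MvPolynomial.coeff_monomial] at hnf
        by_cases heq : δ₀ + ε = ε'
        · subst heq
          exact ⟨h2, hdeg⟩
        · rw [if_neg heq] at hnf; exact absurd rfl hnf
    · intro _
      have key : monomial γ (1 : ZC J) - nf J hJ 𝓕 h𝓕 γ =
          monomial δ₀ 1 * 𝓕 α₀ -
          ∑ ε ∈ S, ((𝓕 α₀).coeff ε) • (monomial (δ₀ + ε) 1 - nf J hJ 𝓕 h𝓕 (δ₀ + ε)) := by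
        rw [nf_mem J hJ 𝓕 h𝓕 hγ, marked_expand J 𝓕 h𝓕 hα₀ δ₀]
        have hγeq : δ₀ + α₀ = γ := by rw [hdec, add_comm]
        rw [hγeq]
        simp only [smul_sub, Finset.sum_sub_distrib]
        abel
      rw [key]
      apply Submodule.sub_mem
      · apply Submodule.subset_span
        exact ⟨α₀, hα₀, δ₀, hmm₀, Or.inr rfl, rfl⟩
      · apply Submodule.sum_mem
        intro ε hεS
        apply Submodule.smul_mem
        by_cases h2 : (δ₀ + ε) ∈ J
        · have := (ih _ (hrel ε hεS h2)).2 h2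
          exact Wle_mono J 𝓕 (Or.inl (hrel ε hεS h2)) this
        · rw [nf_not_mem J hJ 𝓕 h𝓕 h2, sub_self]
          exact Submodule.zero_mem _
  · constructor
    · intro ε hcoeff
      rw [nf_not_mem J hJ 𝓕 h𝓕 hγ, MvPolynomial.coeff_monomial] at hcoeff
      by_cases heq : γ = ε
      · subst heq; exact ⟨hγ, rfl⟩
      · rw [if_neg heq] at hcoeff; exact absurd rfl hcoeff
    · intro h; exact absurd h hγ

/-- linear extension of `nf` to polynomials -/
noncomputable def NF (p : MvPolynomial (Fin (n + 1)) (ZC J)) :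
    MvPolynomial (Fin (n + 1)) (ZC J) :=
  ∑ γ ∈ p.support, (p.coeff γ) • nf J hJ 𝓕 h𝓕 γ

theorem NF_eq_sum_of_subset {p : MvPolynomial (Fin (n + 1)) (ZC J)} {s : Finset (Mon n)}
    (hs : p.support ⊆ s) :
    NF J hJ 𝓕 h𝓕 p = ∑ γ ∈ s, (p.coeff γ) • nf J hJ 𝓕 h𝓕 γ :=
  Finset.sum_subset hs (fun x _ hx => by
    rw [MvPolynomial.notMem_support_iff.1 hx, zero_smul])

theorem NF_add (p q : MvPolynomial (Fin (n + 1)) (ZC J)) :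
    NF J hJ 𝓕 h𝓕 (p + q) = NF J hJ 𝓕 h𝓕 p + NF J hJ 𝓕 h𝓕 q := by
  rw [NF_eq_sum_of_subset J hJ 𝓕 h𝓕 (s := p.support ∪ q.support)
      (MvPolynomial.support_add),
    NF_eq_sum_of_subset J hJ 𝓕 h𝓕 (s := p.support ∪ q.support)
      (Finset.subset_union_left),
    NF_eq_sum_of_subset J hJ 𝓕 h𝓕 (s := p.support ∪ q.support)
      (Finset.subset_union_right), ← Finset.sum_add_distrib]
  apply Finset.sum_congr rfl
  intro γ _
  rw [MvPolynomial.coeff_add, add_smul]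

theorem NF_smul (c : ZC J) (p : MvPolynomial (Fin (n + 1)) (ZC J)) :
    NF J hJ 𝓕 h𝓕 (c • p) = c • NF J hJ 𝓕 h𝓕 p := by
  rw [NF_eq_sum_of_subset J hJ 𝓕 h𝓕 (s := p.support) (MvPolynomial.support_smul),
    NF, Finset.smul_sum]
  apply Finset.sum_congr rfl
  intro γ _
  rw [MvPolynomial.coeff_smul, smul_eq_mul, mul_smul]

theorem NF_monomial (γ : Mon n) (c : ZC J) :
    NF J hJ 𝓕 h𝓕 (monomial γ c) = c • nf J hJ 𝓕 h𝓕 γ := by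
  by_cases hc : c = 0
  · subst hc
    rw [NF]
    simp
  · rw [NF, MvPolynomial.support_monomial, if_neg hc, Finset.sum_singleton,
      MvPolynomial.coeff_monomial, if_pos rfl]

theorem NF_sum {ι : Type*} (s : Finset ι) (f : ι → MvPolynomial (Fin (n + 1)) (ZC J)) :
    NF J hJ 𝓕 h𝓕 (∑ i ∈ s, f i) = ∑ i ∈ s, NF J hJ 𝓕 h𝓕 (f i) := by
  classical
  induction s using Finset.induction_on with
  | empty => simp [NF]
  | insert _ _ hx ih =>
    rw [Finset.sum_insert hx, Finset.sum_insert hx, NF_add, ih]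

theorem NF_marked (h𝓕' : IsGenericMarkedSet J 𝓕) {α : Mon n} (hα : α ∈ minGens J)
    (δ : Mon n) :
    NF J hJ 𝓕 h𝓕 (monomial δ 1 * 𝓕 α) = nf J hJ 𝓕 h𝓕 (δ + α) +
      ∑ ε ∈ ((𝓕 α).support.erase α),
        ((𝓕 α).coeff ε) • nf J hJ 𝓕 h𝓕 (δ + ε) := by
  rw [marked_expand J 𝓕 h𝓕 hα δ, NF_add, NF_sum, NF_monomial, one_smul]
  congr 1
  apply Finset.sum_congr rfl
  intro ε _
  rw [MvPolynomial.smul_monomial, NF_monomial, smul_eq_mul, mul_one]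

theorem NF_canon_zero {α δ : Mon n} (hα : α ∈ minGens J) (hmm : minGeMax α δ) :
    NF J hJ 𝓕 h𝓕 (monomial δ 1 * 𝓕 α) = 0 := by
  have hmemJ : δ + α ∈ J := by
    rw [add_comm]; exact hJ.1 α (minGens_subset hα) δ
  have hcanon : IsCanon J (δ + α) α δ := ⟨hα, hmm, add_comm δ α⟩
  obtain ⟨hcα, hcδ⟩ := canon_eq J hJ hmemJ hcanon
  rw [NF_marked J hJ 𝓕 h𝓕 h𝓕 hα δ, nf_mem J hJ 𝓕 h𝓕 hmemJ, hcα, hcδ]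
  abel

theorem marked_sub_NF (hα : α ∈ minGens J) (δ : Mon n) :
    monomial δ (1 : ZC J) * 𝓕 α - NF J hJ 𝓕 h𝓕 (monomial δ 1 * 𝓕 α) =
      (monomial (δ + α) 1 - nf J hJ 𝓕 h𝓕 (δ + α)) +
      ∑ ε ∈ ((𝓕 α).support.erase α),
        ((𝓕 α).coeff ε) • (monomial (δ + ε) 1 - nf J hJ 𝓕 h𝓕 (δ + ε)) := by
  rw [NF_marked J hJ 𝓕 h𝓕 h𝓕 hα δ]
  conv_lhs => rw [marked_expand J 𝓕 h𝓕 hα δ]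
  simp only [smul_sub, Finset.sum_sub_distrib]
  abel

/-- the span of all marked multiples -/
noncomputable def M₀ : Submodule (ZC J) (MvPolynomial (Fin (n + 1)) (ZC J)) :=
  Submodule.span (ZC J) {p | ∃ α ∈ minGens J, ∃ δ : Mon n, p = monomial δ 1 * 𝓕 α}

theorem Wle_le_M₀ (d : Mon n) : Wle J 𝓕 d ≤ M₀ J 𝓕 := by
  apply Submodule.span_mono
  rintro p ⟨α, hα, δ', hmm, hlt, rfl⟩
  exact ⟨α, hα, δ', rfl⟩

theorem monomial_mul_mem_M₀ (μ : Mon n) {p : MvPolynomial (Fin (n + 1)) (ZC J)}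
    (hp : p ∈ M₀ J 𝓕) : monomial μ 1 * p ∈ M₀ J 𝓕 := by
  induction hp using Submodule.span_induction with
  | mem x hx =>
    obtain ⟨α, hα, δ, rfl⟩ := hx
    apply Submodule.subset_span
    refine ⟨α, hα, μ + δ, ?_⟩
    rw [← mul_assoc, MvPolynomial.monomial_mul, mul_one]
  | zero => rw [mul_zero]; exact Submodule.zero_mem _
  | add x y _ _ hx hy => rw [mul_add]; exact Submodule.add_mem _ hx hy
  | smul c x _ hx => rw [mul_smul_comm]; exact Submodule.smul_mem _ c hx

theorem mul_mem_M₀ (q : MvPolynomial (Fin (n + 1)) (ZC J))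
    {p : MvPolynomial (Fin (n + 1)) (ZC J)} (hp : p ∈ M₀ J 𝓕) : q * p ∈ M₀ J 𝓕 := by
  induction q using MvPolynomial.induction_on generalizing p with
  | C a => rw [← MvPolynomial.smul_eq_C_mul]; exact Submodule.smul_mem _ a hp
  | add q r hq hr => rw [add_mul]; exact Submodule.add_mem _ (hq hp) (hr hp)
  | mul_X q i hq =>
    rw [mul_assoc]
    apply hq
    rw [MvPolynomial.X]
    exact monomial_mul_mem_M₀ J 𝓕 _ hp

theorem markedIdeal_eq_M₀ (p : MvPolynomial (Fin (n + 1)) (ZC J)) :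
    p ∈ markedIdeal J 𝓕 ↔ p ∈ M₀ J 𝓕 := by
  constructor
  · intro hp
    induction hp using Submodule.span_induction with
    | mem x hx =>
      obtain ⟨α, hα, rfl⟩ := hx
      apply Submodule.subset_span
      exact ⟨α, hα, 0, by rw [MvPolynomial.monomial_zero', MvPolynomial.C_1, one_mul]⟩
    | zero => exact Submodule.zero_mem _
    | add x y _ _ hx hy => exact Submodule.add_mem _ hx hy
    | smul c x _ hx => exact mul_mem_M₀ J 𝓕 c hx
  · intro hp
    induction hp using Submodule.span_induction with
    | mem x hx =>
      obtain ⟨α, hα, δ, rfl⟩ := hx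
      exact Ideal.mul_mem_left _ _ (Ideal.subset_span ⟨α, hα, rfl⟩)
    | zero => exact Submodule.zero_mem _
    | add x y _ _ hx hy => exact Submodule.add_mem _ hx hy
    | smul c x _ hx =>
      rw [MvPolynomial.smul_eq_C_mul]
      exact Ideal.mul_mem_left _ _ hx

theorem NF_zero : NF J hJ 𝓕 h𝓕 0 = 0 := by simp [NF]

/-- the set of reduced marked multiples -/
noncomputable def NFgens : Set (MvPolynomial (Fin (n + 1)) (ZC J)) :=
  {p | ∃ α ∈ minGens J, ∃ δ : Mon n, p = NF J hJ 𝓕 h𝓕 (monomial δ 1 * 𝓕 α)}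

theorem NF_mem_span_NFgens {p : MvPolynomial (Fin (n + 1)) (ZC J)} (hp : p ∈ M₀ J 𝓕) :
    NF J hJ 𝓕 h𝓕 p ∈ Submodule.span (ZC J) (NFgens J hJ 𝓕 h𝓕) := by
  induction hp using Submodule.span_induction with
  | mem x hx =>
    obtain ⟨α, hα, δ, rfl⟩ := hx
    exact Submodule.subset_span ⟨α, hα, δ, rfl⟩
  | zero => rw [NF_zero]; exact Submodule.zero_mem _
  | add x y _ _ hx hy => rw [NF_add]; exact Submodule.add_mem _ hx hy
  | smul c x _ hx => rw [NF_smul]; exact Submodule.smul_mem _ c hx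

theorem mem_nSpan_of_support {p : MvPolynomial (Fin (n + 1)) (ZC J)}
    (hp : ∀ γ ∈ p.support, γ ∉ J) : p ∈ nSpan (ZC J) J := by
  rw [p.as_sum]
  apply Submodule.sum_mem
  intro γ hγ
  have : monomial γ (p.coeff γ) = (p.coeff γ) • monomial γ (1 : ZC J) := by
    rw [MvPolynomial.smul_monomial, smul_eq_mul, mul_one]
  rw [this]
  exact Submodule.smul_mem _ _ (Submodule.subset_span ⟨γ, hp γ hγ, rfl⟩)

theorem support_of_mem_nSpan {p : MvPolynomial (Fin (n + 1)) (ZC J)}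
    (hp : p ∈ nSpan (ZC J) J) : ∀ γ ∈ p.support, γ ∉ J := by
  induction hp using Submodule.span_induction with
  | mem x hx =>
    obtain ⟨β, hβ, rfl⟩ := hx
    intro γ hγ
    have := MvPolynomial.support_monomial_subset hγ
    rw [Finset.mem_singleton] at this
    rwa [this]
  | zero => intro γ hγ; simp at hγ
  | add x y _ _ hx hy =>
    intro γ hγ
    rcases Finset.mem_union.1 (MvPolynomial.support_add hγ) with h | h
    · exact hx γ h
    · exact hy γ h
  | smul c x _ hx =>
    intro γ hγ
    exact hx γ (MvPolynomial.support_smul hγ)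

theorem NF_of_mem_nSpan {p : MvPolynomial (Fin (n + 1)) (ZC J)}
    (hp : p ∈ nSpan (ZC J) J) : NF J hJ 𝓕 h𝓕 p = p := by
  have h := support_of_mem_nSpan J hp
  conv_rhs => rw [p.as_sum]
  rw [NF]
  apply Finset.sum_congr rfl
  intro γ hγ
  rw [nf_not_mem J hJ 𝓕 h𝓕 (h γ hγ), MvPolynomial.smul_monomial, smul_eq_mul, mul_one]

theorem NF_mem_nSpan (p : MvPolynomial (Fin (n + 1)) (ZC J)) :
    NF J hJ 𝓕 h𝓕 p ∈ nSpan (ZC J) J := by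
  rw [NF]
  apply Submodule.sum_mem
  intro γ _
  apply Submodule.smul_mem
  exact mem_nSpan_of_support J fun ε hε =>
    ((nf_good J hJ 𝓕 h𝓕 γ).1 ε (MvPolynomial.mem_support_iff.1 hε)).1

theorem marked_sub_NF_mem_M₀ {α : Mon n} (hα : α ∈ minGens J) (δ : Mon n) :
    monomial δ (1 : ZC J) * 𝓕 α - NF J hJ 𝓕 h𝓕 (monomial δ 1 * 𝓕 α) ∈ M₀ J 𝓕 := by
  rw [marked_sub_NF J hJ 𝓕 h𝓕 hα δ]
  apply Submodule.add_mem
  · by_cases h2 : δ + α ∈ J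
    · exact Wle_le_M₀ J 𝓕 _ ((nf_good J hJ 𝓕 h𝓕 (δ + α)).2 h2)
    · rw [nf_not_mem J hJ 𝓕 h𝓕 h2, sub_self]; exact Submodule.zero_mem _
  · apply Submodule.sum_mem
    intro ε _
    apply Submodule.smul_mem
    by_cases h2 : δ + ε ∈ J
    · exact Wle_le_M₀ J 𝓕 _ ((nf_good J hJ 𝓕 h𝓕 (δ + ε)).2 h2)
    · rw [nf_not_mem J hJ 𝓕 h𝓕 h2, sub_self]; exact Submodule.zero_mem _

theorem NF_marked_mem_M₀ {α : Mon n} (hα : α ∈ minGens J) (δ : Mon n) :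
    NF J hJ 𝓕 h𝓕 (monomial δ 1 * 𝓕 α) ∈ M₀ J 𝓕 := by
  have h1 : monomial δ (1 : ZC J) * 𝓕 α ∈ M₀ J 𝓕 :=
    Submodule.subset_span ⟨α, hα, δ, rfl⟩
  have := Submodule.sub_mem _ h1 (marked_sub_NF_mem_M₀ J hJ 𝓕 h𝓕 hα δ)
  simpa using this

theorem NF_marked_coeff {α : Mon n} (hα : α ∈ minGens J) (δ : Mon n) {ε' : Mon n}
    (h : (NF J hJ 𝓕 h𝓕 (monomial δ 1 * 𝓕 α)).coeff ε' ≠ 0) :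
    ε' ∉ J ∧ mdeg ε' = mdeg δ + mdeg α := by
  rw [NF_marked J hJ 𝓕 h𝓕 h𝓕 hα δ, MvPolynomial.coeff_add] at h
  have : (nf J hJ 𝓕 h𝓕 (δ + α)).coeff ε' ≠ 0 ∨
      (∑ ε ∈ ((𝓕 α).support.erase α),
        ((𝓕 α).coeff ε) • nf J hJ 𝓕 h𝓕 (δ + ε)).coeff ε' ≠ 0 := by
    by_contra hcon
    push_neg at hcon
    rw [hcon.1, hcon.2] at h
    exact h (add_zero 0)
  rcases this with h1 | h1
  · obtain ⟨h2, h3⟩ := (nf_good J hJ 𝓕 h𝓕 (δ + α)).1 ε' h1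
    exact ⟨h2, by rw [h3, mdeg_add]⟩
  · rw [MvPolynomial.coeff_sum] at h1
    obtain ⟨ε, hεS, hne⟩ := Finset.exists_ne_zero_of_sum_ne_zero h1
    rw [MvPolynomial.coeff_smul] at hne
    have hnf : (nf J hJ 𝓕 h𝓕 (δ + ε)).coeff ε' ≠ 0 := fun h0 => by
      rw [h0, smul_zero] at hne; exact hne rfl
    obtain ⟨h2, h3⟩ := (nf_good J hJ 𝓕 h𝓕 (δ + ε)).1 ε' hnf
    have hdeg := (gen_support h𝓕 hα
      (MvPolynomial.mem_support_iff.1 (Finset.mem_of_mem_erase hεS))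
      (Finset.ne_of_mem_erase hεS)).2
    exact ⟨h2, by rw [h3, mdeg_add, hdeg]⟩

-- === Section E ===

/-- polynomials all of whose coefficients lie in the ideal `I` -/
noncomputable def coeffsIn (I : Ideal (ZC J)) :
    Submodule (ZC J) (MvPolynomial (Fin (n + 1)) (ZC J)) where
  carrier := {p | ∀ γ : Mon n, p.coeff γ ∈ I}
  add_mem' := fun hp hq γ => by
    rw [MvPolynomial.coeff_add]; exact I.add_mem (hp γ) (hq γ)
  zero_mem' := fun γ => by rw [MvPolynomial.coeff_zero]; exact I.zero_mem
  smul_mem' := fun c p hp γ => by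
    rw [MvPolynomial.coeff_smul, smul_eq_mul]; exact I.mul_mem_left c (hp γ)

theorem monomial_mul_coeffsIn (I : Ideal (ZC J)) (μ : Mon n)
    {p : MvPolynomial (Fin (n + 1)) (ZC J)} (hp : p ∈ coeffsIn J I) :
    monomial μ 1 * p ∈ coeffsIn J I := by
  intro γ
  rw [MvPolynomial.coeff_monomial_mul']
  split
  · rw [one_mul]; exact hp _
  · exact I.zero_mem

theorem NF_coeffsIn (I : Ideal (ZC J)) {p : MvPolynomial (Fin (n + 1)) (ZC J)}
    (hp : p ∈ coeffsIn J I) : NF J hJ 𝓕 h𝓕 p ∈ coeffsIn J I := by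
  intro γ
  rw [NF, MvPolynomial.coeff_sum]
  apply Ideal.sum_mem
  intro γ' _
  rw [MvPolynomial.coeff_smul, smul_eq_mul]
  exact Ideal.mul_mem_right _ I (hp γ')

/-- the ideal generated by coefficients of elements of `(F) ∩ ⟨N(J)⟩` of degree ≤ m+1 -/
noncomputable def aIdeal (m : ℕ) : Ideal (ZC J) :=
  Ideal.span {c : ZC J | ∃ p : MvPolynomial (Fin (n + 1)) (ZC J),
    p ∈ markedIdeal J 𝓕 ∧ p ∈ nSpan (ZC J) J ∧
    (∃ s : ℕ, s ≤ m + 1 ∧ p.IsHomogeneous s) ∧ ∃ γ : Mon n, p.coeff γ = c}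

theorem mdeg_single (j : Fin (n + 1)) : mdeg (Finsupp.single j 1) = 1 := by
  rw [mdeg]
  exact Finsupp.sum_single_index rfl

theorem NF_marked_low (m : ℕ) {α : Mon n} (hα : α ∈ minGens J) (δ : Mon n)
    (hdeg : mdeg δ + mdeg α ≤ m + 1) :
    NF J hJ 𝓕 h𝓕 (monomial δ 1 * 𝓕 α) ∈ coeffsIn J (aIdeal J 𝓕 m) := by
  intro γ
  apply Ideal.subset_span
  refine ⟨NF J hJ 𝓕 h𝓕 (monomial δ 1 * 𝓕 α),
    (markedIdeal_eq_M₀ J 𝓕 _).2 (NF_marked_mem_M₀ J hJ 𝓕 h𝓕 hα δ),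
    NF_mem_nSpan J hJ 𝓕 h𝓕 _, ⟨mdeg δ + mdeg α, hdeg, ?_⟩, γ, rfl⟩
  intro d hd
  have hh := (NF_marked_coeff J hJ 𝓕 h𝓕 hα δ (ε' := d) hd).2
  simpa [mdeg, Finsupp.weight_apply, Finsupp.sum, mul_one] using hh

/-- marked multiples with multiplier lex-strictly-bounded -/
noncomputable def Wlt (d : Mon n) :
    Submodule (ZC J) (MvPolynomial (Fin (n + 1)) (ZC J)) :=
  Submodule.span (ZC J) {p | ∃ α ∈ minGens J, ∃ δ' : Mon n, minGeMax α δ' ∧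
    lexLt δ' d ∧ p = monomial δ' 1 * 𝓕 α}

theorem Wle_le_Wlt {c d : Mon n} (h : lexLt c d) : Wle J 𝓕 c ≤ Wlt J 𝓕 d := by
  apply Submodule.span_mono
  rintro p ⟨α, hα, δ', hmm, hlt, rfl⟩
  refine ⟨α, hα, δ', hmm, ?_, rfl⟩
  rcases hlt with h1 | h1
  · exact lexLt_trans h1 h
  · exact h1 ▸ h

theorem w_mem_Wlt {α : Mon n} (hα : α ∈ minGens J) {i j : Fin (n + 1)}
    (hi : α i ≠ 0) (hij : i < j) :
    monomial (Finsupp.single j 1) (1 : ZC J) * 𝓕 α -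
      NF J hJ 𝓕 h𝓕 (monomial (Finsupp.single j 1) 1 * 𝓕 α) ∈
      Wlt J 𝓕 (Finsupp.single j 1) := by
  rw [marked_sub_NF J hJ 𝓕 h𝓕 hα]
  apply Submodule.add_mem
  · have hmem : Finsupp.single j 1 + α ∈ J := by
      rw [add_comm]; exact hJ.1 α (minGens_subset hα) _
    exact Wle_le_Wlt J 𝓕 (lemB'' J hJ hα hi hij)
      ((nf_good J hJ 𝓕 h𝓕 _).2 hmem)
  · apply Submodule.sum_mem
    intro ε hεS
    apply Submodule.smul_mem
    by_cases h2 : Finsupp.single j 1 + ε ∈ J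
    · have hεnotJ : ε ∉ J := (gen_support h𝓕 hα
        (MvPolynomial.mem_support_iff.1 (Finset.mem_of_mem_erase hεS))
        (Finset.ne_of_mem_erase hεS)).1
      exact Wle_le_Wlt J 𝓕 (lemB' J hJ h2 rfl hεnotJ)
        ((nf_good J hJ 𝓕 h𝓕 _).2 h2)
    · rw [nf_not_mem J hJ 𝓕 h𝓕 h2, sub_self]
      exact Submodule.zero_mem _

/-- all marked multiples with multiplier lex-strictly below `d` -/
noncomputable def Vlt (d : Mon n) :
    Submodule (ZC J) (MvPolynomial (Fin (n + 1)) (ZC J)) :=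
  Submodule.span (ZC J) {p | ∃ α ∈ minGens J, ∃ δ' : Mon n,
    lexLt δ' d ∧ p = monomial δ' 1 * 𝓕 α}

theorem monomial_mul_Wlt (δb d : Mon n) {p : MvPolynomial (Fin (n + 1)) (ZC J)}
    (hp : p ∈ Wlt J 𝓕 d) : monomial δb 1 * p ∈ Vlt J 𝓕 (δb + d) := by
  induction hp using Submodule.span_induction with
  | mem x hx =>
    obtain ⟨α, hα, δ', hmm, hlt, rfl⟩ := hx
    apply Submodule.subset_span
    refine ⟨α, hα, δb + δ', lexLt_add_left δb hlt, ?_⟩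
    rw [← mul_assoc, MvPolynomial.monomial_mul, mul_one]
  | zero => rw [mul_zero]; exact Submodule.zero_mem _
  | add x y _ _ hx hy => rw [mul_add]; exact Submodule.add_mem _ hx hy
  | smul c x _ hx => rw [mul_smul_comm]; exact Submodule.smul_mem _ c hx

/-- KEY LEMMA: all coefficients of all reduced marked multiples lie in `aIdeal` -/
theorem NF_marked_coeffsIn (m : ℕ) (hm : ∀ α ∈ minGens J, mdeg α ≤ m) :
    ∀ δ : Mon n, ∀ α ∈ minGens J,
      NF J hJ 𝓕 h𝓕 (monomial δ 1 * 𝓕 α) ∈ coeffsIn J (aIdeal J 𝓕 m) := by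
  intro δ
  induction δ using WellFounded.induction lexLt_wf with
  | _ δ ih =>
  intro α hα
  by_cases hcan : minGeMax α δ
  · rw [NF_canon_zero J hJ 𝓕 h𝓕 hα hcan]
    exact Submodule.zero_mem _
  by_cases hdeg : mdeg δ + mdeg α ≤ m + 1
  · exact NF_marked_low J hJ 𝓕 h𝓕 m hα δ hdeg
  · rw [minGeMax] at hcan
    push_neg at hcan
    obtain ⟨i, hi, j, hj, hij⟩ := hcan
    have hαi : α i ≠ 0 := Finsupp.mem_support_iff.1 hi
    have hδj : δ j ≠ 0 := Finsupp.mem_support_iff.1 hj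
    have hδeq : (δ - Finsupp.single j 1) + Finsupp.single j 1 = δ := by
      ext l
      simp only [Finsupp.add_apply, Finsupp.tsub_apply, Finsupp.single_apply]
      by_cases hjl : j = l
      · subst hjl; simp; omega
      · simp only [if_neg hjl]; omega
    have hsplit : monomial δ (1 : ZC J) * 𝓕 α = monomial (δ - Finsupp.single j 1) 1 *
        (monomial (Finsupp.single j 1) 1 * 𝓕 α) := by
      rw [← mul_assoc, MvPolynomial.monomial_mul, mul_one, hδeq]
    have hr : NF J hJ 𝓕 h𝓕 (monomial (Finsupp.single j 1) 1 * 𝓕 α) ∈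
        coeffsIn J (aIdeal J 𝓕 m) := by
      apply NF_marked_low J hJ 𝓕 h𝓕 m hα
      rw [mdeg_single]
      have := hm α hα
      omega
    have hw := w_mem_Wlt J hJ 𝓕 h𝓕 hα hαi hij
    have heq2 : monomial δ (1 : ZC J) * 𝓕 α =
        monomial (δ - Finsupp.single j 1) 1 *
          (monomial (Finsupp.single j 1) 1 * 𝓕 α -
            NF J hJ 𝓕 h𝓕 (monomial (Finsupp.single j 1) 1 * 𝓕 α)) +
        monomial (δ - Finsupp.single j 1) 1 *
          NF J hJ 𝓕 h𝓕 (monomial (Finsupp.single j 1) 1 * 𝓕 α) := by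
      rw [mul_sub, hsplit]
      ring
    rw [heq2, NF_add J hJ 𝓕 h𝓕]
    apply Submodule.add_mem
    · have hv := monomial_mul_Wlt J 𝓕 (δ - Finsupp.single j 1) _ hw
      rw [hδeq] at hv
      have hgen : ∀ q ∈ Vlt J 𝓕 δ, NF J hJ 𝓕 h𝓕 q ∈ coeffsIn J (aIdeal J 𝓕 m) := by
        intro q hq
        induction hq using Submodule.span_induction with
        | mem x hx =>
          obtain ⟨α', hα', δ', hlt, rfl⟩ := hx
          exact ih δ' hlt α' hα'
        | zero => rw [NF_zero]; exact Submodule.zero_mem _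
        | add x y _ _ hx hy => rw [NF_add]; exact Submodule.add_mem _ hx hy
        | smul c x _ hx => rw [NF_smul]; exact Submodule.smul_mem _ c hx
      exact hgen _ hv
    · exact NF_coeffsIn J hJ 𝓕 h𝓕 _
        (monomial_mul_coeffsIn J _ _ hr)

end D

end MarkedFamilies

open MarkedFamilies in
/-- `𝔦_J` is generated by the `x`-coefficients of the homogeneous
polynomials of `(𝓕_J) ∩ ⟨N(J)⟩` of degree `s ≤ m + 1`, with `m` the maximal degree of
a minimal generator. -/
theorem stmt_14 {n : ℕ} (J : Set (Mon n)) (hJ : IsStronglyStable J)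
    (m : ℕ) (hm : ∀ α ∈ minGens J, mdeg α ≤ m) (hm' : ∃ α ∈ minGens J, mdeg α = m)
    (𝓕 : Mon n → MvPolynomial (Fin (n + 1)) (ZC J)) (h𝓕 : IsGenericMarkedSet J 𝓕) :
    markedCoeffIdeal J 𝓕 =
      Ideal.span {c : ZC J | ∃ p : MvPolynomial (Fin (n + 1)) (ZC J),
        p ∈ markedIdeal J 𝓕 ∧ p ∈ nSpan (ZC J) J ∧
        (∃ s : ℕ, s ≤ m + 1 ∧ p.IsHomogeneous s) ∧ ∃ γ : Mon n, p.coeff γ = c} := by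
  apply le_antisymm
  · rw [markedCoeffIdeal]
    apply Ideal.span_le.2
    rintro c ⟨p, hpI, hpN, γ, rfl⟩
    have hp₀ : p ∈ M₀ J 𝓕 := (markedIdeal_eq_M₀ J 𝓕 p).1 hpI
    have hNp : NF J hJ 𝓕 h𝓕 p = p := NF_of_mem_nSpan J hJ 𝓕 h𝓕 hpN
    have h1 : NF J hJ 𝓕 h𝓕 p ∈ Submodule.span (ZC J) (NFgens J hJ 𝓕 h𝓕) :=
      NF_mem_span_NFgens J hJ 𝓕 h𝓕 hp₀
    have h2 : Submodule.span (ZC J) (NFgens J hJ 𝓕 h𝓕) ≤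
        MarkedFamilies.coeffsIn J (aIdeal J 𝓕 m) := by
      apply Submodule.span_le.2
      rintro q ⟨α, hα, δ, rfl⟩
      exact NF_marked_coeffsIn J hJ 𝓕 h𝓕 m hm δ α hα
    have h3 : p.coeff γ ∈ aIdeal J 𝓕 m := by
      rw [← hNp]
      exact h2 h1 γ
    exact h3
  · apply Ideal.span_mono
    rintro c ⟨p, h1, h2, _, h4⟩
    exact ⟨p, h1, h2, h4⟩
end

section
/- Let J be a strongly stable monomial ideal in A[x₀,…,xₙ] over a commutative noetherian ring A, let m be the minimal degree with J_m ≠ 0, and assume that no monomial of degree larger than m in B_J is divisible by the minimal variable x₀. If F_J and G_J are two J-marked bases such that the ideals they generate agree in all sufficiently large degrees (i.e., there exists s with (F_J)_t = (G_J)_t for all t ≥ s), then F_J = G_J. -/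
open MvPolynomial

section Aux
open MarkedFamilies Finsupp

variable {n : ℕ}

lemma mdeg_add' (α β : Mon n) : mdeg (α + β) = mdeg α + mdeg β := by
  simpa [mdeg] using Finsupp.sum_add_index' (h := fun (_ : Fin (n+1)) (e : ℕ) => e)
    (fun _ => rfl) (fun _ _ _ => rfl)

lemma mdeg_single' (j : Fin (n + 1)) (k : ℕ) : mdeg (Finsupp.single j k) = k := by
  simp [mdeg, Finsupp.sum_single_index]

lemma mdeg_degree (α : Mon n) : mdeg α = α.degree := rfl

lemma exists_minGen' {J : Set (Mon n)} :
    ∀ d : ℕ, ∀ α : Mon n, mdeg α ≤ d → α ∈ J →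
      ∃ γ ∈ minGens J, ∃ δ : Mon n, γ + δ = α := by
  intro d
  induction d with
  | zero =>
    intro α hd hα
    refine ⟨α, ⟨hα, fun j hj _ => ?_⟩, 0, by simp⟩
    exfalso
    have : 1 ≤ mdeg α := by
      have h1 : Finsupp.single j 1 ≤ α := Finsupp.single_le_iff.mpr (Nat.one_le_iff_ne_zero.mpr hj)
      calc 1 = mdeg (Finsupp.single j 1) := (mdeg_single' j 1).symm
        _ ≤ mdeg α := by
          obtain ⟨c, hc⟩ := le_iff_exists_add.mp h1
          rw [hc, mdeg_add']; omega
    omega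
  | succ d ih =>
    intro α hd hα
    by_cases hmin : α ∈ minGens J
    · exact ⟨α, hmin, 0, by simp⟩
    · have : ∃ j : Fin (n+1), α j ≠ 0 ∧ α - Finsupp.single j 1 ∈ J := by
        by_contra hc
        push_neg at hc
        exact hmin ⟨hα, fun j hj => hc j hj⟩
      obtain ⟨j, hj, hαj⟩ := this
      have hle : Finsupp.single j 1 ≤ α := Finsupp.single_le_iff.mpr (Nat.one_le_iff_ne_zero.mpr hj)
      have hcancel : (α - Finsupp.single j 1) + Finsupp.single j 1 = α :=
        tsub_add_cancel_of_le hle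
      have hdeg : mdeg (α - Finsupp.single j 1) + 1 = mdeg α := by
        conv_rhs => rw [← hcancel]
        rw [mdeg_add', mdeg_single']
      obtain ⟨γ, hγ, δ, hδ⟩ := ih (α - Finsupp.single j 1) (by omega) hαj
      exact ⟨γ, hγ, δ + Finsupp.single j 1, by rw [← add_assoc, hδ, hcancel]⟩

lemma exists_minGen {J : Set (Mon n)} {α : Mon n} (hα : α ∈ J) :
    ∃ γ ∈ minGens J, ∃ δ : Mon n, γ + δ = α :=
  exists_minGen' (mdeg α) α le_rfl hα

lemma claimA {J : Set (Mon n)} (hJ : IsStronglyStable J) {m : ℕ}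
    (hm2 : ∀ α ∈ J, m ≤ mdeg α) (hx0 : ∀ α ∈ minGens J, m < mdeg α → α 0 = 0)
    {β : Mon n} (hβ : β ∉ J) (hdeg : m ≤ mdeg β) :
    β + Finsupp.single (0 : Fin (n+1)) 1 ∉ J := by
  intro hmem
  obtain ⟨γ, hγmin, δ, hγδ⟩ := exists_minGen hmem
  have key : ∀ a : Fin (n+1), γ a + δ a = β a + (Finsupp.single (0 : Fin (n+1)) 1) a := by
    intro a
    rw [← Finsupp.add_apply, ← Finsupp.add_apply, hγδ]
  by_cases hδ0 : δ 0 = 0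
  · -- then γ 0 ≠ 0
    have hk0 := key 0
    simp only [Finsupp.single_eq_same] at hk0
    have hγ0 : γ 0 ≠ 0 := by omega
    have hγm : mdeg γ = m := by
      have h1 := hm2 γ hγmin.1
      by_contra h
      have : m < mdeg γ := by omega
      exact hγ0 (hx0 γ hγmin this)
    have hdeq : mdeg γ + mdeg δ = mdeg β + 1 := by
      have := congrArg mdeg hγδ
      rwa [mdeg_add', mdeg_add', mdeg_single'] at this
    have hδne : δ ≠ 0 := by
      intro h
      have h0 : mdeg (0 : Mon n) = 0 := by simp [mdeg]
      rw [h, h0] at hdeq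
      omega
    obtain ⟨i, hi⟩ := Finsupp.ne_iff.mp hδne
    simp only [Finsupp.coe_zero, Pi.zero_apply] at hi
    have hine : i ≠ 0 := fun h => hi (h ▸ hδ0)
    have hipos : (0 : Fin (n+1)) < i := Fin.pos_of_ne_zero hine
    have hγ' : γ - Finsupp.single 0 1 + Finsupp.single i 1 ∈ J :=
      hJ.2 γ hγmin.1 0 hγ0 i hipos
    have hβeq : (γ - Finsupp.single 0 1 + Finsupp.single i 1) + (δ - Finsupp.single i 1) = β := by
      have hδi : δ i ≠ 0 := hi
      ext a
      have hk := key a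
      simp only [Finsupp.add_apply, Finsupp.tsub_apply] at hk ⊢
      by_cases h0 : a = 0
      · subst h0
        have h1 : (Finsupp.single (0 : Fin (n+1)) 1) 0 = 1 := Finsupp.single_eq_same
        have h2 : (Finsupp.single i (1 : ℕ)) 0 = 0 := Finsupp.single_eq_of_ne' hine
        omega
      · have h1 : (Finsupp.single (0 : Fin (n+1)) 1) a = 0 :=
          Finsupp.single_eq_of_ne' (fun h => h0 h.symm)
        by_cases hia : a = i
        · subst hia
          have h2 : (Finsupp.single a (1 : ℕ)) a = 1 := Finsupp.single_eq_same
          omega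
        · have h2 : (Finsupp.single i (1 : ℕ)) a = 0 :=
            Finsupp.single_eq_of_ne' (fun h => hia h.symm)
          omega
    exact hβ (hβeq ▸ hJ.1 _ hγ' _)
  · -- δ 0 ≠ 0 : β itself is in J
    have hβeq : γ + (δ - Finsupp.single 0 1) = β := by
      ext a
      have hk := key a
      simp only [Finsupp.add_apply, Finsupp.tsub_apply] at hk ⊢
      by_cases h0 : a = 0
      · subst h0
        have h1 : (Finsupp.single (0 : Fin (n+1)) 1) 0 = 1 := Finsupp.single_eq_same
        omega
      · have h1 : (Finsupp.single (0 : Fin (n+1)) 1) a = 0 :=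
          Finsupp.single_eq_of_ne' (fun h => h0 h.symm)
        omega
    exact hβ (hβeq ▸ hJ.1 γ hγmin.1 _)

lemma claimA_iter {J : Set (Mon n)} (hJ : IsStronglyStable J) {m : ℕ}
    (hm2 : ∀ α ∈ J, m ≤ mdeg α) (hx0 : ∀ α ∈ minGens J, m < mdeg α → α 0 = 0)
    {β : Mon n} (hβ : β ∉ J) (hdeg : m ≤ mdeg β) (k : ℕ) :
    β + Finsupp.single (0 : Fin (n+1)) k ∉ J := by
  induction k with
  | zero => simpa using hβ
  | succ k ih =>
    have heq : β + Finsupp.single (0 : Fin (n+1)) (k+1)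
        = (β + Finsupp.single 0 k) + Finsupp.single 0 1 := by
      rw [add_assoc, ← Finsupp.single_add]
    rw [heq]
    exact claimA hJ hm2 hx0 ih (by rw [mdeg_add', mdeg_single']; omega)

end Aux

open MarkedFamilies in
/-- two `J`-marked bases generating ideals that agree in all large
degrees coincide, provided no minimal generator of degree `> m` is divisible by `x₀`. -/
theorem stmt_16 {n : ℕ} {A : Type*} [CommRing A] [IsNoetherianRing A]
    (J : Set (Mon n)) (hJ : IsStronglyStable J) (m : ℕ)
    (hm1 : ∃ α ∈ J, mdeg α = m) (hm2 : ∀ α ∈ J, m ≤ mdeg α)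
    (hx0 : ∀ α ∈ minGens J, m < mdeg α → α 0 = 0)
    (F G : Mon n → MvPolynomial (Fin (n + 1)) A)
    (hF : IsMarkedBasis J F) (hG : IsMarkedBasis J G)
    (hagree : ∃ s : ℕ, ∀ t : ℕ, s ≤ t →
      idealDeg A (markedIdeal J F) t = idealDeg A (markedIdeal J G) t) :
    ∀ α ∈ minGens J, F α = G α := by
  intro α hα
  obtain ⟨s, hs⟩ := hagree
  set t := mdeg α with ht
  have hαJ : α ∈ J := hα.1
  have htm : m ≤ t := hm2 α hαJ
  set c : Mon n := Finsupp.single (0 : Fin (n+1)) s with hc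
  set d : MvPolynomial (Fin (n+1)) A := G α - F α with hd
  -- coefficients of d are supported on N(J) monomials of degree t
  have hdcoeff : ∀ β : Mon n, d.coeff β ≠ 0 → β ∉ J ∧ mdeg β = t := by
    intro β hβ
    have hβne : β ≠ α := by
      intro h
      rw [hd, MvPolynomial.coeff_sub, h, (hG.1 α hα).1, (hF.1 α hα).1, sub_self] at hβ
      exact hβ rfl
    rw [hd, MvPolynomial.coeff_sub] at hβ
    rcases ne_or_eq ((G α).coeff β) 0 with h | h
    · exact (hG.1 α hα).2 β (MvPolynomial.mem_support_iff.mpr h) hβne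
    · rw [h, zero_sub, neg_ne_zero] at hβ
      exact (hF.1 α hα).2 β (MvPolynomial.mem_support_iff.mpr hβ) hβne
  -- G α is homogeneous of degree t
  have hGhom : (G α).IsHomogeneous t := by
    intro β hβ
    rw [show (Finsupp.weight (1 : Fin (n+1) → ℕ)) = Finsupp.weight (fun _ => 1) from rfl,
      ← Finsupp.degree_eq_weight_one, ← mdeg_degree]
    by_cases h : β = α
    · rw [h]
    · exact ((hG.1 α hα).2 β (MvPolynomial.mem_support_iff.mpr hβ) h).2
  -- x₀^s · G α lies in (F)
  have hq : MvPolynomial.monomial c (1 : A) * G α ∈ markedIdeal J F := by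
    have hmemG : MvPolynomial.monomial c (1 : A) * G α ∈
        idealDeg A (markedIdeal J G) (s + t) := by
      refine Submodule.mem_inf.mpr ⟨?_, ?_⟩
      · exact Ideal.mul_mem_left _ _ (Ideal.subset_span ⟨α, hα, rfl⟩)
      · rw [MvPolynomial.mem_homogeneousSubmodule]
        exact (MvPolynomial.isHomogeneous_monomial (1 : A)
          (by rw [← mdeg_degree, hc, mdeg_single'])).mul hGhom
    rw [← hs (s + t) (Nat.le_add_right s t)] at hmemG
    exact (Submodule.mem_inf.mp hmemG).1
  have hqF : MvPolynomial.monomial c (1 : A) * F α ∈ markedIdeal J F :=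
    Ideal.mul_mem_left _ _ (Ideal.subset_span ⟨α, hα, rfl⟩)
  -- x₀^s · d lies in (F) ∩ ⟨N(J)⟩
  have hmemI : MvPolynomial.monomial c (1 : A) * d ∈
      Submodule.restrictScalars A (markedIdeal J F) := by
    rw [hd, mul_sub]
    exact Submodule.sub_mem _ hq hqF
  have hmemN : MvPolynomial.monomial c (1 : A) * d ∈ nSpan A J := by
    have hsum : MvPolynomial.monomial c (1 : A) * d
        = ∑ β ∈ d.support, MvPolynomial.monomial (c + β) (d.coeff β) := by
      conv_lhs => rw [d.as_sum]
      rw [Finset.mul_sum]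
      exact Finset.sum_congr rfl fun β _ => by
        rw [MvPolynomial.monomial_mul, one_mul]
    rw [hsum]
    refine Submodule.sum_mem _ fun β hβ => ?_
    have hβ' := hdcoeff β (MvPolynomial.mem_support_iff.mp hβ)
    have hnot : c + β ∉ J := by
      rw [add_comm]
      exact claimA_iter hJ hm2 hx0 hβ'.1 (hβ'.2 ▸ htm) s
    have : MvPolynomial.monomial (c + β) (d.coeff β)
        = d.coeff β • MvPolynomial.monomial (c + β) (1 : A) := by
      rw [MvPolynomial.smul_monomial, smul_eq_mul, mul_one]
    rw [this]
    exact Submodule.smul_mem _ _ (Submodule.subset_span ⟨c + β, hnot, rfl⟩)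
  have hzero : MvPolynomial.monomial c (1 : A) * d = 0 :=
    Submodule.disjoint_def.mp hF.2.disjoint _ hmemI hmemN
  have hd0 : d = 0 := by
    apply MvPolynomial.ext
    intro β
    have := congrArg (MvPolynomial.coeff (c + β)) hzero
    rwa [MvPolynomial.coeff_monomial_mul, one_mul, MvPolynomial.coeff_zero] at this
  rw [hd] at hd0
  exact (sub_eq_zero.mp hd0).symm
end
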